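/- arXiv:1810.11885 — 4 statements merged into one kernel-verified Lean document; each statement's English description precedes it below -/
import Mathlib

section
/- For all λ, μ, ν ∈ ℂ, the rational gl_n R-matrix satisfies the Yang–Baxter equation on ℂ^n ⊗ ℂ^n ⊗ ℂ^n: R_{1,2}(λ − μ) · R_{1,3}(λ − ν) · R_{2,3}(μ − ν) = R_{2,3}(μ − ν) · R_{1,3}(λ − ν) · R_{1,2}(λ − μ). -/
open Matrix BigOperators

noncomputable section

namespace GLnSoV

/-- The permutation operator on `ℂ^n ⊗ ℂ^n`. -/
def permOp (n : ℕ) : Matrix (Fin n × Fin n) (Fin n × Fin n) ℂ :=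
  Matrix.of fun p q => if p.1 = q.2 ∧ p.2 = q.1 then (1 : ℂ) else 0

/-- The rational `gl_n` R-matrix `R(λ) = λ·Id + η·P`. -/
def Rmat (n : ℕ) (η lam : ℂ) : Matrix (Fin n × Fin n) (Fin n × Fin n) ℂ :=
  lam • (1 : Matrix (Fin n × Fin n) (Fin n × Fin n) ℂ) + η • permOp n

/-- `R(λ)` acting on the `a`-th and `b`-th factors of a tensor product of copies of `ℂ^n`. -/
def Rab (n : ℕ) (η : ℂ) {ι : Type} [Fintype ι] [DecidableEq ι] (a b : ι) (lam : ℂ) :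
    Matrix (ι → Fin n) (ι → Fin n) ℂ :=
  Matrix.of fun x y =>
    Rmat n η lam (x a, x b) (y a, y b) *
      ∏ c ∈ Finset.univ.filter (fun c => c ≠ a ∧ c ≠ b), (if x c = y c then (1 : ℂ) else 0)

/-- `R(λ)` acting on the auxiliary space and the `j`-th site of the quantum space. -/
def Raux (n N : ℕ) (η : ℂ) (lam : ℂ) (j : Fin N) :
    Matrix (Fin n × (Fin N → Fin n)) (Fin n × (Fin N → Fin n)) ℂ :=
  Matrix.of fun p q =>
    Rmat n η lam (p.1, p.2 j) (q.1, q.2 j) *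
      ∏ c ∈ Finset.univ.filter (fun c => c ≠ j), (if p.2 c = q.2 c then (1 : ℂ) else 0)

/-- The twist matrix `K` acting on the auxiliary space. -/
def Kaux (n N : ℕ) (K : Matrix (Fin n) (Fin n) ℂ) :
    Matrix (Fin n × (Fin N → Fin n)) (Fin n × (Fin N → Fin n)) ℂ :=
  Matrix.of fun p q => K p.1 q.1 * (if p.2 = q.2 then (1 : ℂ) else 0)

/-- The twisted monodromy matrix `M^{(K)}(λ) = K_a R_{a,N}(λ-ξ_N) ⋯ R_{a,1}(λ-ξ_1)`. -/
def monodromy (n N : ℕ) (η : ℂ) (ξ : Fin N → ℂ) (K : Matrix (Fin n) (Fin n) ℂ) (lam : ℂ) :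
    Matrix (Fin n × (Fin N → Fin n)) (Fin n × (Fin N → Fin n)) ℂ :=
  Kaux n N K * (List.ofFn (fun j : Fin N => Raux n N η (lam - ξ j.rev) j.rev)).prod

/-- The operator permuting the tensor factors of `(ℂ^n)^{⊗m}` according to `π`. -/
def permTensorOp (n m : ℕ) (π : Equiv.Perm (Fin m)) :
    Matrix (Fin m → Fin n) (Fin m → Fin n) ℂ :=
  Matrix.of fun v w => if v = w ∘ π then (1 : ℂ) else 0

/-- The antisymmetrizer `P⁻_{1…m}` on `(ℂ^n)^{⊗m}`. -/
def antisym (n m : ℕ) : Matrix (Fin m → Fin n) (Fin m → Fin n) ℂ :=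
  (m.factorial : ℂ)⁻¹ •
    ∑ π : Equiv.Perm (Fin m), ((Equiv.Perm.sign π : ℤ) : ℂ) • permTensorOp n m π

/-- The monodromy matrix with the `j`-th copy of `(ℂ^n)^{⊗m}` as auxiliary space. -/
def MauxJ (n N : ℕ) (η : ℂ) (ξ : Fin N → ℂ) (K : Matrix (Fin n) (Fin n) ℂ) (m : ℕ)
    (j : Fin m) (lam : ℂ) :
    Matrix ((Fin m → Fin n) × (Fin N → Fin n)) ((Fin m → Fin n) × (Fin N → Fin n)) ℂ :=
  Matrix.of fun p q =>
    monodromy n N η ξ K lam (p.1 j, p.2) (q.1 j, q.2) *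
      ∏ c ∈ Finset.univ.filter (fun c => c ≠ j), (if p.1 c = q.1 c then (1 : ℂ) else 0)

/-- The antisymmetrizer tensored with the identity of the quantum space. -/
def antisymH (n N m : ℕ) :
    Matrix ((Fin m → Fin n) × (Fin N → Fin n)) ((Fin m → Fin n) × (Fin N → Fin n)) ℂ :=
  Matrix.of fun p q => antisym n m p.1 q.1 * (if p.2 = q.2 then (1 : ℂ) else 0)

/-- The fused transfer matrix `T_m^{(K)}(λ)`, the trace over the `m` auxiliary copies of `ℂ^n`
of `P⁻_{1…m} M₁(λ) M₂(λ-η) ⋯ M_m(λ-(m-1)η)`. -/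
def transfer (n N : ℕ) (η : ℂ) (ξ : Fin N → ℂ) (K : Matrix (Fin n) (Fin n) ℂ)
    (m : ℕ) (lam : ℂ) : Matrix (Fin N → Fin n) (Fin N → Fin n) ℂ :=
  Matrix.of fun x y =>
    ∑ v : Fin m → Fin n,
      (antisymH n N m *
        (List.ofFn (fun j : Fin m => MauxJ n N η ξ K m j (lam - (j : ℕ) * η))).prod)
        (v, x) (v, y)

/-- `K ⊗ ⋯ ⊗ K` on `(ℂ^n)^{⊗m}`. -/
def Ktensor (n : ℕ) (K : Matrix (Fin n) (Fin n) ℂ) (m : ℕ) :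
    Matrix (Fin m → Fin n) (Fin m → Fin n) ℂ :=
  Matrix.of fun v w => ∏ j, K (v j) (w j)

/-- The asymptotic coefficient `tr(P⁻_{1…m} K₁ ⋯ K_m)`. -/
def asymCoef (n : ℕ) (K : Matrix (Fin n) (Fin n) ℂ) (m : ℕ) : ℂ :=
  (antisym n m * Ktensor n K m).trace

/-- The scalar quantum determinant. -/
def qdet (n N : ℕ) (η : ℂ) (ξ : Fin N → ℂ) (K : Matrix (Fin n) (Fin n) ℂ) (lam : ℂ) : ℂ :=
  K.det * ∏ b, ((lam - ξ b + η) * ∏ m ∈ Finset.Icc 1 (n - 1), (lam - ξ b - (m : ℂ) * η))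

/-- The candidate eigenvalue function `t₁^{(K,x)}(λ)`. -/
def t1fun (n N : ℕ) (ξ : Fin N → ℂ) (K : Matrix (Fin n) (Fin n) ℂ) (x : Fin N → ℂ)
    (lam : ℂ) : ℂ :=
  K.trace * ∏ a, (lam - ξ a) +
    ∑ a, x a * ∏ b ∈ Finset.univ.erase a, (lam - ξ b) / (ξ a - ξ b)

/-- The interpolation coefficients `g_a^{(m+1)}(λ)` (second argument is `m`). -/
def gfun (N : ℕ) (η : ℂ) (ξ : Fin N → ℂ) (m : ℕ) (a : Fin N) (lam : ℂ) : ℂ :=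
  (∏ b ∈ Finset.univ.erase a, (lam - ξ b) / (ξ a - ξ b)) *
    ∏ b, ∏ r ∈ Finset.Icc 1 m, (ξ a - ξ b - (r : ℂ) * η)⁻¹

/-- The candidate eigenvalue functions `t_m^{(K,x)}(λ)`, defined recursively. -/
def tfun (n N : ℕ) (η : ℂ) (ξ : Fin N → ℂ) (K : Matrix (Fin n) (Fin n) ℂ)
    (x : Fin N → ℂ) : ℕ → ℂ → ℂ
  | 0, _ => 1
  | 1, lam => t1fun n N ξ K x lam
  | m + 2, lam =>
      (∏ b, ∏ r ∈ Finset.Icc 1 (m + 1), (lam - ξ b - (r : ℂ) * η)) *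
        (asymCoef n K (m + 2) * ∏ b, (lam - ξ b) +
          ∑ a, gfun N η ξ (m + 1) a lam * x a * tfun n N η ξ K x (m + 1) (ξ a - η))

/-- The SoV operator `∏_{a} (T₁^{(K)}(ξ_a))^{h_a}`. -/
def sovOp (n N : ℕ) (η : ℂ) (ξ : Fin N → ℂ) (K : Matrix (Fin n) (Fin n) ℂ)
    (h : Fin N → Fin n) : Matrix (Fin N → Fin n) (Fin N → Fin n) ℂ :=
  (List.ofFn (fun a : Fin N => transfer n N η ξ K 1 (ξ a) ^ (h a : ℕ))).prod

/-- The SoV covector `⟨h| = ⟨S| ∏_a (T₁^{(K)}(ξ_a))^{h_a}`. -/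
def sovCovector (n N : ℕ) (η : ℂ) (ξ : Fin N → ℂ) (K : Matrix (Fin n) (Fin n) ℂ)
    (S : (Fin N → Fin n) → ℂ) (h : Fin N → Fin n) : (Fin N → Fin n) → ℂ :=
  S ᵥ* sovOp n N η ξ K h

/-- The SoV basis hypothesis: the covectors `⟨h|` form a basis of the dual space. -/
def sovBasisHyp (n N : ℕ) (η : ℂ) (ξ : Fin N → ℂ) (K : Matrix (Fin n) (Fin n) ℂ)
    (S : (Fin N → Fin n) → ℂ) : Prop :=
  ∃ B : Module.Basis (Fin N → Fin n) ℂ ((Fin N → Fin n) → ℂ),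
    ∀ h, B h = sovCovector n N η ξ K S h

/-- The coefficient `α₁(λ) = ᾱ ∏_a (λ + η - ξ_a)`. -/
def alpha1 (N : ℕ) (η : ℂ) (ξ : Fin N → ℂ) (abar lam : ℂ) : ℂ :=
  abar * ∏ a, (lam + η - ξ a)

/-- The coefficients `α_b(λ)` of the quantum spectral curve. -/
def alphaF (N : ℕ) (η : ℂ) (ξ : Fin N → ℂ) (abar : ℂ) : ℕ → ℂ → ℂ
  | 0, _ => -1
  | j + 1, lam =>
      (-1 : ℂ) ^ j * ∏ h ∈ Finset.range (j + 1), alpha1 N η ξ abar (lam - (h : ℂ) * η)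


/-- Permutation matrix on `(ℂ^n)^{⊗ι}` associated to `σ`. -/
def permM (n : ℕ) {ι : Type} [Fintype ι] [DecidableEq ι] (σ : Equiv.Perm ι) :
    Matrix (ι → Fin n) (ι → Fin n) ℂ :=
  Matrix.of fun x y => if x = y ∘ σ then (1 : ℂ) else 0

lemma permM_mul (n : ℕ) {ι : Type} [Fintype ι] [DecidableEq ι] (σ τ : Equiv.Perm ι) :
    permM n σ * permM n τ = permM n (σ.trans τ) := by
  ext x y
  rw [Matrix.mul_apply]
  rw [Finset.sum_eq_single (y ∘ τ)]
  · have : y ∘ ⇑(σ.trans τ) = (y ∘ ⇑τ) ∘ ⇑σ := by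
      funext c; simp [Function.comp, Equiv.trans_apply]
    simp only [permM, Matrix.of_apply]
    simp only [if_true, mul_one]
    rw [this]
  · intro z _ hz
    simp [permM, hz]
  · intro h; exact absurd (Finset.mem_univ _) h

lemma Rab_eq (n : ℕ) (η : ℂ) {ι : Type} [Fintype ι] [DecidableEq ι] (a b : ι)
    (hab : a ≠ b) (lam : ℂ) :
    Rab n η a b lam = lam • (1 : Matrix (ι → Fin n) (ι → Fin n) ℂ) +
      η • permM n (Equiv.swap a b) := by
  ext x y
  have hD : (∏ c ∈ Finset.univ.filter (fun c => c ≠ a ∧ c ≠ b),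
      (if x c = y c then (1 : ℂ) else 0)) =
      if (∀ c, c ≠ a → c ≠ b → x c = y c) then (1 : ℂ) else 0 := by
    rw [Finset.prod_boole]
    congr 1
    simp only [eq_iff_iff, Finset.mem_filter, Finset.mem_univ, true_and]
    constructor
    · intro h c h1 h2; exact h c ⟨h1, h2⟩
    · intro h c hc; exact h c hc.1 hc.2
  simp only [Rab, Rmat, permOp, permM, Matrix.of_apply, Matrix.add_apply, Matrix.smul_apply,
    Matrix.one_apply, smul_eq_mul, hD, add_mul]
  congr 1
  · rw [mul_assoc]
    congr 1
    by_cases h : x = y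
    · subst h; simp
    · rw [if_neg h]
      by_cases h1 : (x a, x b) = (y a, y b)
      · rw [if_pos h1, one_mul]
        rw [if_neg]
        intro hall
        apply h
        funext c
        by_cases hca : c = a
        · subst hca; exact congrArg Prod.fst h1
        by_cases hcb : c = b
        · subst hcb; exact congrArg Prod.snd h1
        · exact hall c hca hcb
      · rw [if_neg h1, zero_mul]
  · rw [mul_assoc]
    congr 1
    by_cases h : x = y ∘ (Equiv.swap a b)
    · rw [if_pos h]
      subst h
      rw [if_pos, if_pos, one_mul]
      · intro c hca hcb
        simp [Equiv.swap_apply_of_ne_of_ne hca hcb]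
      · constructor <;> simp
    · rw [if_neg h]
      by_cases h1 : x a = y b ∧ x b = y a
      · rw [if_pos h1, one_mul, if_neg]
        intro hall
        apply h
        funext c
        by_cases hca : c = a
        · subst hca; simpa using h1.1
        by_cases hcb : c = b
        · subst hcb; simpa using h1.2
        · simpa [Equiv.swap_apply_of_ne_of_ne hca hcb] using hall c hca hcb
      · rw [if_neg h1, zero_mul]

/-- the rational `gl_n` R-matrix satisfies the Yang–Baxter equation on
`ℂ^n ⊗ ℂ^n ⊗ ℂ^n`. -/
theorem yang_baxter_equation (n : ℕ) (hn : 1 ≤ n) (η : ℂ) (lam mu nu : ℂ) :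
    Rab n η (0 : Fin 3) 1 (lam - mu) * Rab n η (0 : Fin 3) 2 (lam - nu) *
        Rab n η (1 : Fin 3) 2 (mu - nu) =
      Rab n η (1 : Fin 3) 2 (mu - nu) * Rab n η (0 : Fin 3) 2 (lam - nu) *
        Rab n η (0 : Fin 3) 1 (lam - mu) := by
  rw [Rab_eq n η (0 : Fin 3) 1 (by decide), Rab_eq n η (0 : Fin 3) 2 (by decide),
    Rab_eq n η (1 : Fin 3) 2 (by decide)]
  have cA : ((Equiv.swap (0 : Fin 3) 1).trans (Equiv.swap (0 : Fin 3) 2)) =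
      ((Equiv.swap (0 : Fin 3) 2).trans (Equiv.swap (1 : Fin 3) 2)) := by decide
  have cA' : ((Equiv.swap (1 : Fin 3) 2).trans (Equiv.swap (0 : Fin 3) 1)) =
      ((Equiv.swap (0 : Fin 3) 2).trans (Equiv.swap (1 : Fin 3) 2)) := by decide
  have cB : ((Equiv.swap (0 : Fin 3) 1).trans (Equiv.swap (1 : Fin 3) 2)) =
      ((Equiv.swap (0 : Fin 3) 2).trans (Equiv.swap (0 : Fin 3) 1)) := by decide
  have cB' : ((Equiv.swap (1 : Fin 3) 2).trans (Equiv.swap (0 : Fin 3) 2)) =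
      ((Equiv.swap (0 : Fin 3) 2).trans (Equiv.swap (0 : Fin 3) 1)) := by decide
  have cT : (((Equiv.swap (0 : Fin 3) 2).trans (Equiv.swap (1 : Fin 3) 2)).trans
      (Equiv.swap (1 : Fin 3) 2)) = Equiv.swap (0 : Fin 3) 2 := by decide
  have cT' : (((Equiv.swap (0 : Fin 3) 2).trans (Equiv.swap (0 : Fin 3) 1)).trans
      (Equiv.swap (0 : Fin 3) 1)) = Equiv.swap (0 : Fin 3) 2 := by decide
  simp only [add_mul, mul_add, smul_mul_assoc, mul_smul_comm, one_mul, mul_one,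
    permM_mul, cA, cA', cB, cB', cT, cT']
  module

end GLnSoV
end
end

section
/- The twisted monodromy matrix satisfies the RTT (Yang–Baxter) relation: for all λ, μ ∈ ℂ, as operators on ℂ^n ⊗ ℂ^n ⊗ H one has R_{a,b}(λ − μ) · M_a^{(K)}(λ) · M_b^{(K)}(μ) = M_b^{(K)}(μ) · M_a^{(K)}(λ) · R_{a,b}(λ − μ), where a and b denote the first and second auxiliary copies of ℂ^n, M_a^{(K)}(λ) acts on the a-th auxiliary copy and H (identity on the b-th copy), M_b^{(K)}(μ) acts on the b-th auxiliary copy and H (identity on the a-th copy), and R_{a,b} acts on the two auxiliary copies (identity on H). -/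
open Matrix BigOperators

noncomputable section

namespace GLnSoV

/-- The monodromy matrix acting on the first auxiliary copy of `ℂ^n` (identity on the second). -/
def monA (n N : ℕ) (η : ℂ) (ξ : Fin N → ℂ) (K : Matrix (Fin n) (Fin n) ℂ) (lam : ℂ) :
    Matrix ((Fin n × Fin n) × (Fin N → Fin n)) ((Fin n × Fin n) × (Fin N → Fin n)) ℂ :=
  Matrix.of fun p q =>
    monodromy n N η ξ K lam (p.1.1, p.2) (q.1.1, q.2) * (if p.1.2 = q.1.2 then (1 : ℂ) else 0)

/-- The monodromy matrix acting on the second auxiliary copy of `ℂ^n` (identity on the first). -/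
def monB (n N : ℕ) (η : ℂ) (ξ : Fin N → ℂ) (K : Matrix (Fin n) (Fin n) ℂ) (lam : ℂ) :
    Matrix ((Fin n × Fin n) × (Fin N → Fin n)) ((Fin n × Fin n) × (Fin N → Fin n)) ℂ :=
  Matrix.of fun p q =>
    monodromy n N η ξ K lam (p.1.2, p.2) (q.1.2, q.2) * (if p.1.1 = q.1.1 then (1 : ℂ) else 0)

/-- The R-matrix acting on the two auxiliary copies of `ℂ^n` (identity on the quantum space). -/
def RabQ (n N : ℕ) (η : ℂ) (lam : ℂ) :
    Matrix ((Fin n × Fin n) × (Fin N → Fin n)) ((Fin n × Fin n) × (Fin N → Fin n)) ℂ :=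
  Matrix.of fun p q => Rmat n η lam p.1 q.1 * (if p.2 = q.2 then (1 : ℂ) else 0)

/-! ### Auxiliary machinery for the RTT relation -/

section RTTaux

open Equiv Kronecker

set_option linter.unusedSectionVars false

variable {n : ℕ} {ι : Type} [Fintype ι] [DecidableEq ι]

/-- permutation matrix on `(ι → Fin n)`. -/
def Pm (n : ℕ) {ι : Type} [Fintype ι] [DecidableEq ι] (σ : Equiv.Perm ι) :
    Matrix (ι → Fin n) (ι → Fin n) ℂ :=
  Matrix.of fun x y => if x ∘ σ = y then 1 else 0

/-- product of one-site matrices. -/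
def Dm (n : ℕ) {ι : Type} [Fintype ι] [DecidableEq ι] (M : ι → Matrix (Fin n) (Fin n) ℂ) :
    Matrix (ι → Fin n) (ι → Fin n) ℂ :=
  Matrix.of fun x y => ∏ c, M c (x c) (y c)

lemma Pm_mul_Pm (σ τ : Equiv.Perm ι) : Pm n σ * Pm n τ = Pm n (σ * τ) := by
  ext x y
  simp only [Matrix.mul_apply, Pm, Matrix.of_apply]
  rw [Finset.sum_eq_single (x ∘ σ)]
  · rw [if_pos rfl, one_mul]
    congr 1
  · intro b _ hb; rw [if_neg (fun h => hb h.symm), zero_mul]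
  · intro h; exact absurd (Finset.mem_univ _) h

lemma Dm_mul_Dm (M M' : ι → Matrix (Fin n) (Fin n) ℂ) :
    Dm n M * Dm n M' = Dm n (fun c => M c * M' c) := by
  ext x y
  simp only [Matrix.mul_apply, Dm, Matrix.of_apply, ← Finset.prod_mul_distrib]
  rw [show (∏ c, ∑ t : Fin n, M c (x c) t * M' c t (y c)) =
      ∑ z ∈ Fintype.piFinset (fun _ : ι => (Finset.univ : Finset (Fin n))),
        ∏ c, M c (x c) (z c) * M' c (z c) (y c) from Finset.prod_univ_sum _ _]
  apply Finset.sum_congr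
  · ext z; simp [Fintype.mem_piFinset]
  · intros; rfl

lemma Dm_one : Dm n (fun _ : ι => 1) = 1 := by
  ext x y
  simp only [Dm, Matrix.of_apply, Matrix.one_apply]
  rw [Finset.prod_boole]
  congr 1
  simp [funext_iff]

lemma Pm_one : Pm n (1 : Equiv.Perm ι) = 1 := by
  ext x y
  simp [Pm, Matrix.one_apply, Function.comp_def]

lemma Pm_mul_Dm (σ : Equiv.Perm ι) (M : ι → Matrix (Fin n) (Fin n) ℂ) :
    Pm n σ * Dm n M = Dm n (fun c => M (σ⁻¹ c)) * Pm n σ := by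
  ext x y
  simp only [Matrix.mul_apply, Pm, Dm, Matrix.of_apply]
  rw [Finset.sum_eq_single (x ∘ σ)]
  · rw [if_pos rfl, one_mul]
    rw [Finset.sum_eq_single (fun c => y (σ⁻¹ c))]
    · rw [if_pos (by funext c; simp), mul_one]
      rw [← Equiv.prod_comp σ (fun c => M (σ⁻¹ c) (x c) (y (σ⁻¹ c)))]
      simp [Function.comp_def]
    · intro b _ hb
      rw [if_neg, mul_zero]
      intro h; apply hb; funext c
      have := congrFun h (σ⁻¹ c); simpa using this
    · intro h; exact absurd (Finset.mem_univ _) h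
  · intro b _ hb; rw [if_neg (fun h => hb h.symm), zero_mul]
  · intro h; exact absurd (Finset.mem_univ _) h

/-- `R(u)` acting at sites `a`, `b` (in operator form). -/
def Rop (n : ℕ) (η : ℂ) {ι : Type} [Fintype ι] [DecidableEq ι] (a b : ι) (u : ℂ) :
    Matrix (ι → Fin n) (ι → Fin n) ℂ :=
  u • (1 : Matrix (ι → Fin n) (ι → Fin n) ℂ) + η • Pm n (Equiv.swap a b)

/-- `K` acting at site `a`. -/
def Kat (n : ℕ) {ι : Type} [Fintype ι] [DecidableEq ι] (K : Matrix (Fin n) (Fin n) ℂ) (a : ι) :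
    Matrix (ι → Fin n) (ι → Fin n) ℂ :=
  Dm n (fun c => if c = a then K else 1)

omit [Fintype ι] in
lemma swapS1 (a b c : ι) (hab : a ≠ b) (hac : a ≠ c) (hbc : b ≠ c) :
    swap a c * swap b c = swap a b * swap a c := by
  ext x; simp only [Equiv.Perm.mul_apply, Equiv.swap_apply_def]; split_ifs <;> simp_all

omit [Fintype ι] in
lemma swapS2 (a b c : ι) (hab : a ≠ b) (hac : a ≠ c) (hbc : b ≠ c) :
    swap b c * swap a b = swap a b * swap a c := by
  ext x; simp only [Equiv.Perm.mul_apply, Equiv.swap_apply_def]; split_ifs <;> simp_all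

omit [Fintype ι] in
lemma swapS3 (a b c : ι) (hab : a ≠ b) (hac : a ≠ c) (hbc : b ≠ c) :
    swap a c * swap a b = swap a b * swap b c := by
  ext x; simp only [Equiv.Perm.mul_apply, Equiv.swap_apply_def]; split_ifs <;> simp_all

omit [Fintype ι] in
lemma swapS4 (a b c : ι) (hab : a ≠ b) (hac : a ≠ c) (hbc : b ≠ c) :
    swap b c * swap a c = swap a b * swap b c := by
  ext x; simp only [Equiv.Perm.mul_apply, Equiv.swap_apply_def]; split_ifs <;> simp_all

omit [Fintype ι] in
lemma swapS5a (a b c : ι) : swap a b * (swap a b * swap a c) = swap a c := by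
  rw [← mul_assoc, Equiv.swap_mul_self, one_mul]

omit [Fintype ι] in
lemma swapS5b (a b c : ι) (hab : a ≠ b) (hac : a ≠ c) (hbc : b ≠ c) :
    swap b c * (swap a b * swap b c) = swap a c := by
  set_option maxHeartbeats 1000000 in
  ext x; simp only [Equiv.Perm.mul_apply, Equiv.swap_apply_def]; split_ifs <;> simp_all

/-- The Yang–Baxter equation in operator form. -/
lemma Rop_YBE (η : ℂ) (a b c : ι) (hab : a ≠ b) (hac : a ≠ c) (hbc : b ≠ c) (u v : ℂ) :
    Rop n η a b (u - v) * Rop n η a c u * Rop n η b c v =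
      Rop n η b c v * Rop n η a c u * Rop n η a b (u - v) := by
  simp only [Rop, add_mul, mul_add, smul_mul_assoc, mul_smul_comm, one_mul, mul_one,
    smul_smul, Pm_mul_Pm, mul_assoc]
  rw [swapS1 a b c hab hac hbc, swapS2 a b c hab hac hbc, swapS3 a b c hab hac hbc,
    swapS4 a b c hab hac hbc, swapS5a a b c, swapS5b a b c hab hac hbc]
  match_scalars <;> ring

omit [Fintype ι] in
lemma swap_disjoint_comm (a b c d : ι) (h1 : a ≠ c) (h2 : a ≠ d) (h3 : b ≠ c) (h4 : b ≠ d) :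
    swap a b * swap c d = swap c d * swap a b := by
  ext x; simp only [Equiv.Perm.mul_apply, Equiv.swap_apply_def]; split_ifs <;> simp_all

lemma Rop_disjoint_comm (η : ℂ) (a b c d : ι) (h1 : a ≠ c) (h2 : a ≠ d) (h3 : b ≠ c)
    (h4 : b ≠ d) (u v : ℂ) : Commute (Rop n η a b u) (Rop n η c d v) := by
  unfold Commute SemiconjBy
  simp only [Rop, add_mul, mul_add, smul_mul_assoc, mul_smul_comm, one_mul, mul_one,
    smul_smul, Pm_mul_Pm]
  rw [swap_disjoint_comm a b c d h1 h2 h3 h4]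
  match_scalars <;> ring

lemma Kat_comm_Pm (K : Matrix (Fin n) (Fin n) ℂ) (a : ι) (σ : Equiv.Perm ι) (hfix : σ a = a) :
    Pm n σ * Kat n K a = Kat n K a * Pm n σ := by
  rw [Kat, Pm_mul_Dm]
  have : (fun c => if σ⁻¹ c = a then K else 1) = (fun c => if c = a then K else 1) := by
    funext c
    congr 1
    simp only [eq_iff_iff]
    rw [Equiv.Perm.inv_eq_iff_eq, hfix]
  rw [this]

lemma Kat_comm_Rop (K : Matrix (Fin n) (Fin n) ℂ) (a b c : ι) (hab : a ≠ b) (hac : a ≠ c)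
    (η u : ℂ) : Commute (Kat n K a) (Rop n η b c u) := by
  unfold Commute SemiconjBy
  simp only [Rop, mul_add, add_mul, mul_smul_comm, smul_mul_assoc, mul_one, one_mul]
  rw [Kat_comm_Pm K a (swap b c) (Equiv.swap_apply_of_ne_of_ne hab hac)]

lemma Kat_comm_Kat (K : Matrix (Fin n) (Fin n) ℂ) (a b : ι) :
    Kat n K a * Kat n K b = Kat n K b * Kat n K a := by
  rw [Kat, Kat, Dm_mul_Dm, Dm_mul_Dm]
  refine congrArg (Dm n) (funext fun c => ?_)
  by_cases h1 : c = a <;> by_cases h2 : c = b <;> simp [h1, h2]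

lemma Rop_comm_KK (K : Matrix (Fin n) (Fin n) ℂ) (a b : ι) (hab : a ≠ b) (η u : ℂ) :
    Rop n η a b u * (Kat n K a * Kat n K b) = (Kat n K a * Kat n K b) * Rop n η a b u := by
  rw [Kat, Kat, Dm_mul_Dm]
  simp only [Rop, mul_add, add_mul, mul_smul_comm, smul_mul_assoc, mul_one, one_mul]
  rw [Pm_mul_Dm]
  have : (fun c => (if (Equiv.swap a b)⁻¹ c = a then K else 1) *
      if (Equiv.swap a b)⁻¹ c = b then K else 1) =
      (fun c => (if c = a then K else 1) * if c = b then K else 1) := by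
    funext c
    by_cases h1 : c = a
    · simp only [h1]
      rw [show (Equiv.swap a b)⁻¹ a = b by simp]
      simp [hab, Ne.symm hab]
    · by_cases h2 : c = b
      · simp only [h2]
        rw [show (Equiv.swap a b)⁻¹ b = a by simp]
        simp [hab, Ne.symm hab]
      · rw [show (Equiv.swap a b)⁻¹ c = c by
          simp [Equiv.swap_apply_of_ne_of_ne h1 h2]]
  rw [this]

/-- The zipper lemma: RTT relation for products from sitewise RTT relations. -/
lemma zipper {G : Type*} [Monoid G] (R : G) :
    ∀ l : List (G × G), (∀ p ∈ l, R * p.1 * p.2 = p.2 * p.1 * R) →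
      l.Pairwise (fun p q => Commute p.1 q.2 ∧ Commute q.1 p.2) →
      R * (l.map Prod.fst).prod * (l.map Prod.snd).prod =
        (l.map Prod.snd).prod * (l.map Prod.fst).prod * R := by
  intro l
  induction l with
  | nil => simp
  | cons p l ih =>
    intro h1 h2
    rw [List.pairwise_cons] at h2
    obtain ⟨hp, h2'⟩ := h2
    have h0 := h1 p List.mem_cons_self
    have ihh := ih (fun q hq => h1 q (List.mem_cons_of_mem p hq)) h2'
    simp only [List.map_cons, List.prod_cons]
    set F := (l.map Prod.fst).prod with hF
    set S := (l.map Prod.snd).prod with hS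
    have cF : Commute p.2 F := by
      apply Commute.list_prod_right
      intro x hx
      obtain ⟨q, hq, rfl⟩ := List.mem_map.mp hx
      exact ((hp q hq).2).symm
    have cS : Commute p.1 S := by
      apply Commute.list_prod_right
      intro x hx
      obtain ⟨q, hq, rfl⟩ := List.mem_map.mp hx
      exact (hp q hq).1
    calc R * (p.1 * F) * (p.2 * S)
        = (R * p.1) * (F * p.2) * S := by simp only [mul_assoc]
      _ = (R * p.1) * (p.2 * F) * S := by rw [cF.symm.eq]
      _ = (R * p.1 * p.2) * (F * S) := by simp only [mul_assoc]
      _ = (p.2 * p.1 * R) * (F * S) := by rw [h0]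
      _ = p.2 * p.1 * (R * F * S) := by simp only [mul_assoc]
      _ = p.2 * p.1 * (S * F * R) := by rw [ihh]
      _ = p.2 * ((p.1 * S) * F) * R := by simp only [mul_assoc]
      _ = p.2 * ((S * p.1) * F) * R := by rw [cS.eq]
      _ = (p.2 * S) * (p.1 * F) * R := by simp only [mul_assoc]

end RTTaux

section Conn
open Equiv Kronecker

variable {n N : ℕ}

/-- reindexing for the first-auxiliary-space embedding -/
def eAEquiv (n N : ℕ) : ((Fin n × Fin n) × (Fin N → Fin n)) ≃ ((Fin n × (Fin N → Fin n)) × Fin n) where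
  toFun p := ((p.1.1, p.2), p.1.2)
  invFun r := ((r.1.1, r.2), r.1.2)
  left_inv _ := rfl
  right_inv _ := rfl

/-- reindexing for the second-auxiliary-space embedding -/
def eBEquiv (n N : ℕ) : ((Fin n × Fin n) × (Fin N → Fin n)) ≃ ((Fin n × (Fin N → Fin n)) × Fin n) where
  toFun p := ((p.1.2, p.2), p.1.1)
  invFun r := ((r.2, r.1.1), r.1.2)
  left_inv _ := rfl
  right_inv _ := rfl

/-- embedding: act on first auxiliary copy and quantum space -/
def PhiA (n N : ℕ) (X : Matrix (Fin n × (Fin N → Fin n)) (Fin n × (Fin N → Fin n)) ℂ) :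
    Matrix ((Fin n × Fin n) × (Fin N → Fin n)) ((Fin n × Fin n) × (Fin N → Fin n)) ℂ :=
  (X ⊗ₖ (1 : Matrix (Fin n) (Fin n) ℂ)).submatrix (eAEquiv n N) (eAEquiv n N)

def PhiB (n N : ℕ) (X : Matrix (Fin n × (Fin N → Fin n)) (Fin n × (Fin N → Fin n)) ℂ) :
    Matrix ((Fin n × Fin n) × (Fin N → Fin n)) ((Fin n × Fin n) × (Fin N → Fin n)) ℂ :=
  (X ⊗ₖ (1 : Matrix (Fin n) (Fin n) ℂ)).submatrix (eBEquiv n N) (eBEquiv n N)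

lemma PhiA_apply (X) (p q : (Fin n × Fin n) × (Fin N → Fin n)) :
    PhiA n N X p q = X (p.1.1, p.2) (q.1.1, q.2) * (if p.1.2 = q.1.2 then 1 else 0) := by
  simp [PhiA, eAEquiv, Matrix.one_apply, Matrix.kroneckerMap_apply]

lemma PhiB_apply (X) (p q : (Fin n × Fin n) × (Fin N → Fin n)) :
    PhiB n N X p q = X (p.1.2, p.2) (q.1.2, q.2) * (if p.1.1 = q.1.1 then 1 else 0) := by
  simp [PhiB, eBEquiv, Matrix.one_apply, Matrix.kroneckerMap_apply]

lemma PhiA_mul (X Y) : PhiA n N X * PhiA n N Y = PhiA n N (X * Y) := by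
  rw [PhiA, PhiA, PhiA, Matrix.submatrix_mul_equiv _ _ _ (eAEquiv n N) _,
    ← Matrix.mul_kronecker_mul, Matrix.one_mul]

lemma PhiB_mul (X Y) : PhiB n N X * PhiB n N Y = PhiB n N (X * Y) := by
  rw [PhiB, PhiB, PhiB, Matrix.submatrix_mul_equiv _ _ _ (eBEquiv n N) _,
    ← Matrix.mul_kronecker_mul, Matrix.one_mul]

lemma PhiA_listProd (l : List (Matrix (Fin n × (Fin N → Fin n)) (Fin n × (Fin N → Fin n)) ℂ)) :
    PhiA n N l.prod = (l.map (PhiA n N)).prod := by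
  induction l with
  | nil => simp [PhiA, Matrix.one_kronecker_one, Matrix.submatrix_one_equiv]
  | cons x l ih => simp only [List.prod_cons, List.map_cons, ← ih, PhiA_mul]

lemma PhiB_listProd (l : List (Matrix (Fin n × (Fin N → Fin n)) (Fin n × (Fin N → Fin n)) ℂ)) :
    PhiB n N l.prod = (l.map (PhiB n N)).prod := by
  induction l with
  | nil => simp [PhiB, Matrix.one_kronecker_one, Matrix.submatrix_one_equiv]
  | cons x l ih => simp only [List.prod_cons, List.map_cons, ← ih, PhiB_mul]

/-- the identification of the full space with `(Bool ⊕ Fin N) → Fin n` -/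
def qEquiv (n N : ℕ) : ((Fin n × Fin n) × (Fin N → Fin n)) ≃ ((Bool ⊕ Fin N) → Fin n) where
  toFun p := Sum.elim (fun s => cond s p.1.2 p.1.1) p.2
  invFun f := ((f (Sum.inl false), f (Sum.inl true)), fun j => f (Sum.inr j))
  left_inv _ := rfl
  right_inv f := by
    funext x
    rcases x with s | j
    · cases s <;> rfl
    · rfl

lemma qEquiv_apply (p : (Fin n × Fin n) × (Fin N → Fin n)) :
    qEquiv n N p = Sum.elim (fun s => cond s p.1.2 p.1.1) p.2 := rfl

lemma submatrix_listProd {α β : Type} [Fintype α] [Fintype β] [DecidableEq α] [DecidableEq β]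
    (e : α ≃ β) (l : List (Matrix β β ℂ)) :
    (l.map (fun X => X.submatrix e e)).prod = l.prod.submatrix e e := by
  induction l with
  | nil => simp [Matrix.submatrix_one_equiv]
  | cons x l ih => simp only [List.prod_cons, List.map_cons, ih, Matrix.submatrix_mul_equiv]

end Conn
section Conn2
open Equiv

variable {n N : ℕ}

private lemma forall_split {α : Type} [DecidableEq α] (j : α) (P : α → Prop) :
    (∀ c, P c) ↔ P j ∧ ∀ c, c ≠ j → P c :=
  ⟨fun h => ⟨h j, fun c _ => h c⟩, fun h c => by
    by_cases hc : c = j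
    · exact hc ▸ h.1
    · exact h.2 c hc⟩

private lemma ite_and_one_zero (X D : Prop) [Decidable X] [Decidable D] :
    (if X ∧ D then (1:ℂ) else 0) = (if X then (1:ℂ) else 0) * (if D then (1:ℂ) else 0) := by
  by_cases hX : X <;> by_cases hD : D <;> simp [hX, hD]

lemma RabQ_eq (η u : ℂ) : RabQ n N η u =
    (Rop n η (Sum.inl false) (Sum.inl true) u).submatrix (qEquiv n N) (qEquiv n N) := by
  ext p q
  have e1 : (qEquiv n N p = qEquiv n N q) ↔ (p.1.1 = q.1.1 ∧ p.1.2 = q.1.2) ∧ p.2 = q.2 := by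
    rw [Equiv.apply_eq_iff_eq, Prod.ext_iff, Prod.ext_iff]
  have hsw : ∀ j : Fin N, (swap (Sum.inl false) (Sum.inl true) :
      Equiv.Perm (Bool ⊕ Fin N)) (Sum.inr j) = Sum.inr j := fun j =>
    Equiv.swap_apply_of_ne_of_ne (by simp) (by simp)
  have e2 : ((qEquiv n N p) ∘ (swap (Sum.inl false) (Sum.inl true) :
      Equiv.Perm (Bool ⊕ Fin N)) = qEquiv n N q) ↔
      (p.1.1 = q.1.2 ∧ p.1.2 = q.1.1) ∧ p.2 = q.2 := by
    rw [show (p.2 = q.2) ↔ ∀ x, p.2 x = q.2 x from funext_iff]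
    simp only [funext_iff, Sum.forall, Bool.forall_bool, Function.comp_apply,
      Equiv.swap_apply_left, Equiv.swap_apply_right, qEquiv, Equiv.coe_fn_mk, Sum.elim_inl,
      Sum.elim_inr, cond_false, cond_true, hsw]
    tauto
  simp only [RabQ, Rop, Rmat, permOp, Matrix.of_apply, Matrix.submatrix_apply,
    Matrix.add_apply, Matrix.smul_apply, Matrix.one_apply, Pm, smul_eq_mul, Prod.ext_iff]
  simp only [e1, e2, ite_and_one_zero]
  ring

lemma PhiA_Kaux (K : Matrix (Fin n) (Fin n) ℂ) :
    PhiA n N (Kaux n N K) = (Kat n K (Sum.inl false)).submatrix (qEquiv n N) (qEquiv n N) := by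
  ext p q
  rw [PhiA_apply]
  have e3 : (∀ i ∈ (Finset.univ : Finset (Fin N)), p.2 i = q.2 i) ↔ p.2 = q.2 := by
    simp [funext_iff]
  simp only [Kaux, Kat, Dm, Matrix.submatrix_apply, Matrix.of_apply, Fintype.prod_sum_type,
    Fintype.prod_bool, qEquiv_apply, Equiv.coe_fn_mk, Sum.elim_inl, Sum.elim_inr, cond_false,
    cond_true, reduceIte, Matrix.one_apply, Finset.prod_boole, e3]
  simp only [show ((Sum.inl true : Bool ⊕ Fin N) = Sum.inl false) = False by simp,
    show ((Sum.inl false : Bool ⊕ Fin N) = Sum.inl true) = False by simp,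
    show (∀ x : Fin N, ((Sum.inr x : Bool ⊕ Fin N) = Sum.inl false) = False) from
      fun x => by simp,
    show (∀ x : Fin N, ((Sum.inr x : Bool ⊕ Fin N) = Sum.inl true) = False) from
      fun x => by simp, if_false, Matrix.one_apply, Finset.prod_boole, e3]
  ring

lemma PhiB_Kaux (K : Matrix (Fin n) (Fin n) ℂ) :
    PhiB n N (Kaux n N K) = (Kat n K (Sum.inl true)).submatrix (qEquiv n N) (qEquiv n N) := by
  ext p q
  rw [PhiB_apply]
  have e3 : (∀ i ∈ (Finset.univ : Finset (Fin N)), p.2 i = q.2 i) ↔ p.2 = q.2 := by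
    simp [funext_iff]
  simp only [Kaux, Kat, Dm, Matrix.submatrix_apply, Matrix.of_apply, Fintype.prod_sum_type,
    Fintype.prod_bool, qEquiv_apply, Equiv.coe_fn_mk, Sum.elim_inl, Sum.elim_inr, cond_false,
    cond_true, reduceIte, Matrix.one_apply, Finset.prod_boole, e3]
  simp only [show ((Sum.inl true : Bool ⊕ Fin N) = Sum.inl false) = False by simp,
    show ((Sum.inl false : Bool ⊕ Fin N) = Sum.inl true) = False by simp,
    show (∀ x : Fin N, ((Sum.inr x : Bool ⊕ Fin N) = Sum.inl false) = False) from
      fun x => by simp,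
    show (∀ x : Fin N, ((Sum.inr x : Bool ⊕ Fin N) = Sum.inl true) = False) from
      fun x => by simp, if_false, Matrix.one_apply, Finset.prod_boole, e3]
  ring

lemma PhiA_Raux (η u : ℂ) (j : Fin N) :
    PhiA n N (Raux n N η u j) =
      (Rop n η (Sum.inl false) (Sum.inr j) u).submatrix (qEquiv n N) (qEquiv n N) := by
  ext p q
  rw [PhiA_apply]
  have e1 : (qEquiv n N p = qEquiv n N q) ↔
      (p.1.1 = q.1.1 ∧ p.2 j = q.2 j) ∧ (p.1.2 = q.1.2 ∧ ∀ c, c ≠ j → p.2 c = q.2 c) := by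
    rw [Equiv.apply_eq_iff_eq, Prod.ext_iff, Prod.ext_iff,
      show (p.2 = q.2) ↔ ∀ x, p.2 x = q.2 x from funext_iff, forall_split j]
    tauto
  have hx : ∀ c : Fin N, c ≠ j → ((Equiv.swap (Sum.inl false) (Sum.inr j) :
      Equiv.Perm (Bool ⊕ Fin N)) (Sum.inr c)) = Sum.inr c := fun c hc =>
    Equiv.swap_apply_of_ne_of_ne (by simp) (by simp [hc])
  have hy : ((Equiv.swap (Sum.inl false) (Sum.inr j) :
      Equiv.Perm (Bool ⊕ Fin N)) (Sum.inl true)) = Sum.inl true :=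
    Equiv.swap_apply_of_ne_of_ne (by simp) (by simp)
  have e2 : ((qEquiv n N p) ∘ (Equiv.swap (Sum.inl false) (Sum.inr j) :
      Equiv.Perm (Bool ⊕ Fin N)) = qEquiv n N q) ↔
      (p.1.1 = q.2 j ∧ p.2 j = q.1.1) ∧ (p.1.2 = q.1.2 ∧ ∀ c, c ≠ j → p.2 c = q.2 c) := by
    constructor
    · intro h
      have h1 := congrFun h (Sum.inl false)
      have h2 := congrFun h (Sum.inl true)
      have h3 := congrFun h (Sum.inr j)
      rw [Function.comp_apply, Equiv.swap_apply_left] at h1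
      rw [Function.comp_apply, hy] at h2
      rw [Function.comp_apply, Equiv.swap_apply_right] at h3
      refine ⟨⟨?_, ?_⟩, ?_, fun c hc => ?_⟩
      · simpa [qEquiv_apply] using h3
      · simpa [qEquiv_apply] using h1
      · simpa [qEquiv_apply] using h2
      · have h4 := congrFun h (Sum.inr c)
        rw [Function.comp_apply, hx c hc] at h4
        simpa [qEquiv_apply] using h4
    · rintro ⟨⟨hb1, hb2⟩, hb3, hb4⟩
      funext x
      rcases x with s | c
      · cases s
        · rw [Function.comp_apply, Equiv.swap_apply_left]
          simpa [qEquiv_apply] using hb2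
        · rw [Function.comp_apply, hy]
          simpa [qEquiv_apply] using hb3
      · by_cases hc : c = j
        · subst hc
          rw [Function.comp_apply, Equiv.swap_apply_right]
          simpa [qEquiv_apply] using hb1
        · rw [Function.comp_apply, hx c hc]
          simpa [qEquiv_apply] using hb4 c hc
  have e4 : (∀ c ∈ Finset.univ.filter (fun c => c ≠ j), p.2 c = q.2 c) ↔
      (∀ c, c ≠ j → p.2 c = q.2 c) := by
    simp
  simp only [Raux, Rop, Rmat, permOp, Matrix.of_apply, Matrix.submatrix_apply,
    Matrix.add_apply, Matrix.smul_apply, Matrix.one_apply, Pm, smul_eq_mul, Prod.mk.injEq,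
    Finset.prod_boole, e4]
  simp only [e1, e2, ite_and_one_zero]
  ring

lemma PhiB_Raux (η u : ℂ) (j : Fin N) :
    PhiB n N (Raux n N η u j) =
      (Rop n η (Sum.inl true) (Sum.inr j) u).submatrix (qEquiv n N) (qEquiv n N) := by
  ext p q
  rw [PhiB_apply]
  have e1 : (qEquiv n N p = qEquiv n N q) ↔
      (p.1.2 = q.1.2 ∧ p.2 j = q.2 j) ∧ (p.1.1 = q.1.1 ∧ ∀ c, c ≠ j → p.2 c = q.2 c) := by
    rw [Equiv.apply_eq_iff_eq, Prod.ext_iff, Prod.ext_iff,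
      show (p.2 = q.2) ↔ ∀ x, p.2 x = q.2 x from funext_iff, forall_split j]
    tauto
  have hx : ∀ c : Fin N, c ≠ j → ((Equiv.swap (Sum.inl true) (Sum.inr j) :
      Equiv.Perm (Bool ⊕ Fin N)) (Sum.inr c)) = Sum.inr c := fun c hc =>
    Equiv.swap_apply_of_ne_of_ne (by simp) (by simp [hc])
  have hy : ((Equiv.swap (Sum.inl true) (Sum.inr j) :
      Equiv.Perm (Bool ⊕ Fin N)) (Sum.inl false)) = Sum.inl false :=
    Equiv.swap_apply_of_ne_of_ne (by simp) (by simp)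
  have e2 : ((qEquiv n N p) ∘ (Equiv.swap (Sum.inl true) (Sum.inr j) :
      Equiv.Perm (Bool ⊕ Fin N)) = qEquiv n N q) ↔
      (p.1.2 = q.2 j ∧ p.2 j = q.1.2) ∧ (p.1.1 = q.1.1 ∧ ∀ c, c ≠ j → p.2 c = q.2 c) := by
    constructor
    · intro h
      have h1 := congrFun h (Sum.inl true)
      have h2 := congrFun h (Sum.inl false)
      have h3 := congrFun h (Sum.inr j)
      rw [Function.comp_apply, Equiv.swap_apply_left] at h1
      rw [Function.comp_apply, hy] at h2
      rw [Function.comp_apply, Equiv.swap_apply_right] at h3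
      refine ⟨⟨?_, ?_⟩, ?_, fun c hc => ?_⟩
      · simpa [qEquiv_apply] using h3
      · simpa [qEquiv_apply] using h1
      · simpa [qEquiv_apply] using h2
      · have h4 := congrFun h (Sum.inr c)
        rw [Function.comp_apply, hx c hc] at h4
        simpa [qEquiv_apply] using h4
    · rintro ⟨⟨hb1, hb2⟩, hb3, hb4⟩
      funext x
      rcases x with s | c
      · cases s
        · rw [Function.comp_apply, hy]
          simpa [qEquiv_apply] using hb3
        · rw [Function.comp_apply, Equiv.swap_apply_left]
          simpa [qEquiv_apply] using hb2
      · by_cases hc : c = j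
        · subst hc
          rw [Function.comp_apply, Equiv.swap_apply_right]
          simpa [qEquiv_apply] using hb1
        · rw [Function.comp_apply, hx c hc]
          simpa [qEquiv_apply] using hb4 c hc
  have e4 : (∀ c ∈ Finset.univ.filter (fun c => c ≠ j), p.2 c = q.2 c) ↔
      (∀ c, c ≠ j → p.2 c = q.2 c) := by
    simp
  simp only [Raux, Rop, Rmat, permOp, Matrix.of_apply, Matrix.submatrix_apply,
    Matrix.add_apply, Matrix.smul_apply, Matrix.one_apply, Pm, smul_eq_mul, Prod.mk.injEq,
    Finset.prod_boole, e4]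
  simp only [e1, e2, ite_and_one_zero]
  ring

lemma monA_eq (η : ℂ) (ξ : Fin N → ℂ) (K : Matrix (Fin n) (Fin n) ℂ) (lam : ℂ) :
    monA n N η ξ K lam =
      ((Kat n K (Sum.inl false)) * (List.ofFn (fun j : Fin N =>
        Rop n η (Sum.inl false) (Sum.inr j.rev) (lam - ξ j.rev))).prod).submatrix
        (qEquiv n N) (qEquiv n N) := by
  have h0 : monA n N η ξ K lam = PhiA n N (monodromy n N η ξ K lam) := by
    ext p q; rw [PhiA_apply]; rfl
  rw [h0, monodromy, ← PhiA_mul, PhiA_listProd, List.map_ofFn, PhiA_Kaux]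
  have h1 : List.ofFn ((PhiA n N) ∘ fun j : Fin N => Raux n N η (lam - ξ j.rev) j.rev) =
      (List.ofFn (fun j : Fin N =>
        Rop n η (Sum.inl false) (Sum.inr j.rev) (lam - ξ j.rev))).map
        (fun X => X.submatrix (qEquiv n N) (qEquiv n N)) := by
    rw [List.map_ofFn]
    congr 1
    funext j
    simp [Function.comp, PhiA_Raux]
  rw [h1, submatrix_listProd, Matrix.submatrix_mul_equiv _ _ _ (qEquiv n N) _]

lemma monB_eq (η : ℂ) (ξ : Fin N → ℂ) (K : Matrix (Fin n) (Fin n) ℂ) (lam : ℂ) :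
    monB n N η ξ K lam =
      ((Kat n K (Sum.inl true)) * (List.ofFn (fun j : Fin N =>
        Rop n η (Sum.inl true) (Sum.inr j.rev) (lam - ξ j.rev))).prod).submatrix
        (qEquiv n N) (qEquiv n N) := by
  have h0 : monB n N η ξ K lam = PhiB n N (monodromy n N η ξ K lam) := by
    ext p q; rw [PhiB_apply]; rfl
  rw [h0, monodromy, ← PhiB_mul, PhiB_listProd, List.map_ofFn, PhiB_Kaux]
  have h1 : List.ofFn ((PhiB n N) ∘ fun j : Fin N => Raux n N η (lam - ξ j.rev) j.rev) =
      (List.ofFn (fun j : Fin N =>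
        Rop n η (Sum.inl true) (Sum.inr j.rev) (lam - ξ j.rev))).map
        (fun X => X.submatrix (qEquiv n N) (qEquiv n N)) := by
    rw [List.map_ofFn]
    congr 1
    funext j
    simp [Function.comp, PhiB_Raux]
  rw [h1, submatrix_listProd, Matrix.submatrix_mul_equiv _ _ _ (qEquiv n N) _]


end Conn2

/-- the twisted monodromy matrix satisfies the RTT (Yang–Baxter) relation. -/
theorem monodromy_RTT (n N : ℕ) (hn : 1 ≤ n) (hN : 1 ≤ N) (η : ℂ) (ξ : Fin N → ℂ)
    (K : Matrix (Fin n) (Fin n) ℂ) (lam mu : ℂ) :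
    RabQ n N η (lam - mu) * monA n N η ξ K lam * monB n N η ξ K mu =
      monB n N η ξ K mu * monA n N η ξ K lam * RabQ n N η (lam - mu) := by
  classical
  rw [RabQ_eq, monA_eq, monB_eq]
  simp only [Matrix.submatrix_mul_equiv]
  refine congrArg (fun X : Matrix ((Bool ⊕ Fin N) → Fin n) ((Bool ⊕ Fin N) → Fin n) ℂ =>
    X.submatrix (qEquiv n N) (qEquiv n N)) ?_
  set Rq := Rop n η (Sum.inl false : Bool ⊕ Fin N) (Sum.inl true) (lam - mu) with hRq
  set KA := Kat n K (Sum.inl false : Bool ⊕ Fin N) with hKA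
  set KB := Kat n K (Sum.inl true : Bool ⊕ Fin N) with hKB
  set PA := (List.ofFn (fun j : Fin N =>
    Rop n η (Sum.inl false) (Sum.inr j.rev) (lam - ξ j.rev))).prod with hPA
  set PB := (List.ofFn (fun j : Fin N =>
    Rop n η (Sum.inl true) (Sum.inr j.rev) (mu - ξ j.rev))).prod with hPB
  -- commutation facts
  have h2 : Commute KB PA := by
    apply Commute.list_prod_right
    intro x hx
    obtain ⟨j, rfl⟩ := List.mem_ofFn.mp hx
    exact Kat_comm_Rop K (Sum.inl true) (Sum.inl false) (Sum.inr j.rev) (by simp) (by simp) η _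
  have h3 : Commute KA PB := by
    apply Commute.list_prod_right
    intro x hx
    obtain ⟨j, rfl⟩ := List.mem_ofFn.mp hx
    exact Kat_comm_Rop K (Sum.inl false) (Sum.inl true) (Sum.inr j.rev) (by simp) (by simp) η _
  have h4 : Commute KA KB := Kat_comm_Kat K _ _
  have hK : Rq * (KA * KB) = (KA * KB) * Rq :=
    Rop_comm_KK K (Sum.inl false) (Sum.inl true) (by simp) η (lam - mu)
  -- the zipper
  have hz : Rq * PA * PB = PB * PA * Rq := by
    have hmapf : (List.ofFn (fun j : Fin N =>
        (Rop n η (Sum.inl false) (Sum.inr j.rev) (lam - ξ j.rev),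
         Rop n η (Sum.inl true) (Sum.inr j.rev) (mu - ξ j.rev)))).map Prod.fst =
        List.ofFn (fun j : Fin N =>
          Rop n η (Sum.inl false) (Sum.inr j.rev) (lam - ξ j.rev)) := by
      rw [List.map_ofFn]; rfl
    have hmaps : (List.ofFn (fun j : Fin N =>
        (Rop n η (Sum.inl false) (Sum.inr j.rev) (lam - ξ j.rev),
         Rop n η (Sum.inl true) (Sum.inr j.rev) (mu - ξ j.rev)))).map Prod.snd =
        List.ofFn (fun j : Fin N =>
          Rop n η (Sum.inl true) (Sum.inr j.rev) (mu - ξ j.rev)) := by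
      rw [List.map_ofFn]; rfl
    rw [hPA, hPB, ← hmapf, ← hmaps]
    apply zipper
    · intro p hp
      obtain ⟨j, rfl⟩ := List.mem_ofFn.mp hp
      have := Rop_YBE (n := n) η (Sum.inl false) (Sum.inl true) (Sum.inr j.rev)
        (by simp) (by simp) (by simp) (lam - ξ j.rev) (mu - ξ j.rev)
      rw [show lam - ξ j.rev - (mu - ξ j.rev) = lam - mu by ring] at this
      exact this
    · rw [List.pairwise_ofFn]
      intro i j hij
      have hne : i.rev ≠ j.rev := fun h => (Fin.rev_inj.mp h ▸ hij).false
      constructor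
      · exact Rop_disjoint_comm η (Sum.inl false) (Sum.inr i.rev) (Sum.inl true)
          (Sum.inr j.rev) (by simp) (by simp) (by simp) (by simp [hne]) _ _
      · exact (Rop_disjoint_comm η (Sum.inl true) (Sum.inr i.rev) (Sum.inl false)
          (Sum.inr j.rev) (by simp) (by simp) (by simp) (by simp [hne]) _ _).symm
  -- assemble
  show Rq * (KA * PA) * (KB * PB) = KB * PB * (KA * PA) * Rq
  simp only [mul_assoc]
  calc Rq * (KA * (PA * (KB * PB)))
      = Rq * (KA * (KB * (PA * PB))) := by
        rw [show PA * (KB * PB) = KB * (PA * PB) from by rw [← mul_assoc, ← h2.eq, mul_assoc]]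
    _ = (KA * KB) * (Rq * (PA * PB)) := by
        rw [show KA * (KB * (PA * PB)) = (KA * KB) * (PA * PB) from (mul_assoc _ _ _).symm,
          ← mul_assoc, hK, mul_assoc]
    _ = (KA * KB) * (PB * (PA * Rq)) := by
        rw [show Rq * (PA * PB) = PB * (PA * Rq) from by rw [← mul_assoc, hz, mul_assoc]]
    _ = KB * (PB * (KA * (PA * Rq))) := by
        rw [h4.eq, mul_assoc, show KA * (PB * (PA * Rq)) = PB * (KA * (PA * Rq)) from by
          rw [← mul_assoc, h3.eq, mul_assoc]]

end GLnSoV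
end
end

section
/- For every 1 ≤ m ≤ n, the fused transfer matrix is polynomial in the spectral parameter of degree mN with central leading coefficient: there exist operators A_0, …, A_{mN} on H, independent of λ, such that T_m^{(K)}(λ) = Σ_{k=0}^{mN} λ^k A_k for all λ ∈ ℂ, and A_{mN} = tr_{1…m}(P^−_{1…m} K_1 K_2 ⋯ K_m) · Id_H, where K_j denotes K acting on the j-th copy of ℂ^n in (ℂ^n)^{⊗m}. -/
open Matrix BigOperators

noncomputable section

namespace GLnSoV

/-! ### Auxiliary material for `transfer_polynomial` -/

open Polynomial

section PolyAux

variable {ι : Type} [Fintype ι] [DecidableEq ι]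

/-- Entrywise degree bound for a matrix of polynomials. -/
def matDegLE (A : Matrix ι ι (Polynomial ℂ)) (d : ℕ) : Prop :=
  ∀ p q, (A p q).natDegree ≤ d

/-- Entrywise coefficient extraction. -/
def coeffM (d : ℕ) (A : Matrix ι ι (Polynomial ℂ)) : Matrix ι ι ℂ :=
  A.map fun p => p.coeff d

lemma matDegLE_one : matDegLE (1 : Matrix ι ι (Polynomial ℂ)) 0 := by
  intro p q
  rcases eq_or_ne p q with h | h <;> simp [Matrix.one_apply, h]

lemma coeffM_one : coeffM 0 (1 : Matrix ι ι (Polynomial ℂ)) = 1 := by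
  ext p q
  rcases eq_or_ne p q with h | h <;> simp [coeffM, Matrix.one_apply, h]

lemma matDegLE_mul {A B : Matrix ι ι (Polynomial ℂ)} {a b : ℕ}
    (hA : matDegLE A a) (hB : matDegLE B b) : matDegLE (A * B) (a + b) := by
  intro p q
  rw [Matrix.mul_apply]
  refine Polynomial.natDegree_sum_le_of_forall_le _ _ fun r _ => ?_
  exact Polynomial.natDegree_mul_le.trans (add_le_add (hA p r) (hB r q))

lemma coeffM_mul {A B : Matrix ι ι (Polynomial ℂ)} {a b : ℕ}
    (hA : matDegLE A a) (hB : matDegLE B b) :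
    coeffM (a + b) (A * B) = coeffM a A * coeffM b B := by
  ext p q
  simp only [coeffM, Matrix.map_apply, Matrix.mul_apply, Polynomial.finset_sum_coeff]
  exact Finset.sum_congr rfl fun r _ => Polynomial.coeff_mul_add_eq_of_natDegree_le (hA p r) (hB r q)

lemma matDegLE_listProd (d : ℕ) :
    ∀ l : List (Matrix ι ι (Polynomial ℂ)), (∀ M ∈ l, matDegLE M d) →
      matDegLE l.prod (d * l.length)
  | [], _ => by simpa using matDegLE_one
  | M :: t, h => by
    have ht := matDegLE_listProd d t fun M' hM' => h M' (List.mem_cons_of_mem _ hM')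
    have hmul := matDegLE_mul (h M List.mem_cons_self) ht
    have hlen : d * (M :: t).length = d + d * t.length := by
      rw [List.length_cons]; ring
    rw [List.prod_cons, hlen]
    exact hmul

lemma coeffM_listProd (d : ℕ) :
    ∀ l : List (Matrix ι ι (Polynomial ℂ)), (∀ M ∈ l, matDegLE M d) →
      coeffM (d * l.length) l.prod = (l.map (coeffM d)).prod
  | [], _ => by simpa using coeffM_one
  | M :: t, h => by
    have ht := coeffM_listProd d t fun M' hM' => h M' (List.mem_cons_of_mem _ hM')
    have hdt := matDegLE_listProd d t fun M' hM' => h M' (List.mem_cons_of_mem _ hM')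
    have hlen : d * (M :: t).length = d + d * t.length := by
      rw [List.length_cons]; ring
    rw [List.prod_cons, hlen, coeffM_mul (h M List.mem_cons_self) hdt, ht,
      List.map_cons, List.prod_cons]

end PolyAux

lemma sum_delta_update {n m : ℕ} (v : Fin m → Fin n) (j : Fin m) (F : (Fin m → Fin n) → ℂ) :
    (∑ u : Fin m → Fin n,
      (∏ c ∈ Finset.univ.filter (fun c => c ≠ j), if v c = u c then (1 : ℂ) else 0) * F u)
      = ∑ a : Fin n, F (Function.update v j a) := by
  calc (∑ u : Fin m → Fin n,
        (∏ c ∈ Finset.univ.filter (fun c => c ≠ j), if v c = u c then (1 : ℂ) else 0) * F u)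
      = ∑ u ∈ Finset.univ.filter (fun u : Fin m → Fin n => ∀ c, c ≠ j → v c = u c), F u := by
        rw [Finset.sum_filter]
        refine Finset.sum_congr rfl fun u _ => ?_
        rw [Finset.prod_boole]
        by_cases h : ∀ c, c ≠ j → v c = u c
        · rw [if_pos h, if_pos, one_mul]
          intro c hc
          exact h c (by simpa using hc)
        · rw [if_neg h, if_neg, zero_mul]
          intro hc
          exact h fun c h2 => hc c (by simp [h2])
    _ = ∑ a : Fin n, F (Function.update v j a) := by
        refine Finset.sum_nbij' (fun u => u j) (fun a => Function.update v j a)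
          (fun u _ => Finset.mem_univ _) ?_ ?_ ?_ ?_
        · intro a _
          simp only [Finset.mem_filter, Finset.mem_univ, true_and]
          intro c hc
          rw [Function.update_of_ne hc]
        · intro u hu
          simp only [Finset.mem_filter, Finset.mem_univ, true_and] at hu
          funext c
          rcases eq_or_ne c j with rfl | hc
          · rw [Function.update_self]
          · rw [Function.update_of_ne hc]; exact hu c hc
        · intro a _; rw [Function.update_self]
        · intro u hu
          simp only [Finset.mem_filter, Finset.mem_univ, true_and] at hu
          congr 1
          funext c
          rcases eq_or_ne c j with rfl | hc
          · rw [Function.update_self]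
          · rw [Function.update_of_ne hc]; exact (hu c hc).symm

lemma delta_pair {n N : ℕ} (p q : Fin n × (Fin N → Fin n)) (j : Fin N) :
    ((if (p.1, p.2 j) = (q.1, q.2 j) then (1 : ℂ) else 0) *
      ∏ c ∈ Finset.univ.filter (fun c => c ≠ j), if p.2 c = q.2 c then (1 : ℂ) else 0)
      = if p = q then 1 else 0 := by
  rw [Finset.prod_boole]
  by_cases h : p = q
  · subst h; simp
  · rw [if_neg h]
    by_cases h1 : (p.1, p.2 j) = (q.1, q.2 j)
    · rw [if_pos h1, if_neg, mul_zero]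
      intro hc
      apply h
      rw [Prod.mk.injEq] at h1
      refine Prod.ext h1.1 (funext fun c => ?_)
      rcases eq_or_ne c j with rfl | hcj
      · exact h1.2
      · exact hc c (by simp [hcj])
    · rw [if_neg h1, zero_mul]

lemma Raux_decomp (n N : ℕ) (η lam : ℂ) (j : Fin N) :
    Raux n N η lam j
      = lam • (1 : Matrix (Fin n × (Fin N → Fin n)) (Fin n × (Fin N → Fin n)) ℂ)
        + Raux n N η 0 j := by
  ext p q
  have hd := delta_pair p q j
  simp only [Raux, Rmat, Matrix.of_apply, Matrix.add_apply, Matrix.smul_apply, smul_eq_mul,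
    Matrix.one_apply, add_mul, zero_mul, zero_add]
  rw [mul_assoc, hd]

/-- Polynomial model of one `R`-matrix factor (site `i.rev`, shift `s`). -/
def RauxP (n N : ℕ) (η : ℂ) (ξ : Fin N → ℂ) (s : ℂ) (i : Fin N) :
    Matrix (Fin n × (Fin N → Fin n)) (Fin n × (Fin N → Fin n)) (Polynomial ℂ) :=
  (Raux n N η 0 i.rev).map C + (X - C (ξ i.rev + s)) • 1

lemma RauxP_eval (n N : ℕ) (η : ℂ) (ξ : Fin N → ℂ) (s : ℂ) (i : Fin N) (lam : ℂ) :
    (RauxP n N η ξ s i).map (eval lam) = Raux n N η (lam - ξ i.rev - s) i.rev := by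
  rw [Raux_decomp n N η (lam - ξ i.rev - s) i.rev]
  ext p q
  simp only [RauxP, Matrix.map_apply, Matrix.add_apply, Matrix.smul_apply, smul_eq_mul,
    Matrix.one_apply, eval_add, eval_mul, eval_sub, eval_X, eval_C, apply_ite (eval lam),
    eval_one, eval_zero]
  ring

lemma RauxP_degLE (n N : ℕ) (η : ℂ) (ξ : Fin N → ℂ) (s : ℂ) (i : Fin N) :
    matDegLE (RauxP n N η ξ s i) 1 := by
  intro p q
  rw [RauxP, Matrix.add_apply, Matrix.map_apply, Matrix.smul_apply, smul_eq_mul,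
    Matrix.one_apply]
  refine le_trans (Polynomial.natDegree_add_le _ _) ?_
  rw [max_le_iff]
  constructor
  · simp
  · rcases eq_or_ne p q with h | h
    · rw [if_pos h, mul_one, Polynomial.natDegree_X_sub_C]
    · rw [if_neg h, mul_zero, Polynomial.natDegree_zero]
      exact Nat.zero_le _

lemma RauxP_coeffM (n N : ℕ) (η : ℂ) (ξ : Fin N → ℂ) (s : ℂ) (i : Fin N) :
    coeffM 1 (RauxP n N η ξ s i) = 1 := by
  ext p q
  rcases eq_or_ne p q with h | h
  · simp [coeffM, RauxP, Matrix.add_apply, Matrix.map_apply, Matrix.one_apply, h,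
      Polynomial.coeff_C, coeff_sub, coeff_X_one]
  · simp [coeffM, RauxP, Matrix.add_apply, Matrix.map_apply, Matrix.one_apply, h,
      Polynomial.coeff_C]

lemma mapC_degLE (A : Matrix ι ι ℂ) [Fintype ι] [DecidableEq ι] :
    matDegLE (A.map C) 0 := by
  intro p q; simp [Matrix.map_apply]

lemma mapC_coeffM (A : Matrix ι ι ℂ) [Fintype ι] [DecidableEq ι] :
    coeffM 0 (A.map C) = A := by
  ext p q; simp [coeffM, Matrix.map_apply]

/-- Polynomial model of the monodromy matrix, with shift `s`. -/
def monodromyP (n N : ℕ) (η : ℂ) (ξ : Fin N → ℂ) (K : Matrix (Fin n) (Fin n) ℂ) (s : ℂ) :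
    Matrix (Fin n × (Fin N → Fin n)) (Fin n × (Fin N → Fin n)) (Polynomial ℂ) :=
  (Kaux n N K).map C * (List.ofFn fun i : Fin N => RauxP n N η ξ s i).prod

lemma monodromyP_eval (n N : ℕ) (η : ℂ) (ξ : Fin N → ℂ) (K : Matrix (Fin n) (Fin n) ℂ)
    (s lam : ℂ) :
    (monodromyP n N η ξ K s).map (eval lam) = monodromy n N η ξ K (lam - s) := by
  rw [monodromyP, monodromy, ← Polynomial.coe_evalRingHom, ← RingHom.mapMatrix_apply,
    _root_.map_mul, map_list_prod, List.map_ofFn]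
  congr 1
  · rw [RingHom.mapMatrix_apply]
    ext p q
    simp [Matrix.map_apply]
  · congr 1
    congr 1
    funext i
    show (Polynomial.evalRingHom lam).mapMatrix (RauxP n N η ξ s i) = _
    rw [RingHom.mapMatrix_apply, Polynomial.coe_evalRingHom, RauxP_eval]
    have : lam - ξ i.rev - s = lam - s - ξ i.rev := by ring
    rw [this]

lemma monodromyP_degLE (n N : ℕ) (η : ℂ) (ξ : Fin N → ℂ) (K : Matrix (Fin n) (Fin n) ℂ)
    (s : ℂ) : matDegLE (monodromyP n N η ξ K s) N := by
  have hl : ∀ M ∈ List.ofFn fun i : Fin N => RauxP n N η ξ s i, matDegLE M 1 := by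
    intro M hM
    rw [List.mem_ofFn] at hM
    obtain ⟨i, rfl⟩ := hM
    exact RauxP_degLE n N η ξ s i
  have h := matDegLE_mul (mapC_degLE (Kaux n N K)) (matDegLE_listProd 1 _ hl)
  rw [monodromyP]
  simpa using h

lemma monodromyP_coeffM (n N : ℕ) (η : ℂ) (ξ : Fin N → ℂ) (K : Matrix (Fin n) (Fin n) ℂ)
    (s : ℂ) : coeffM N (monodromyP n N η ξ K s) = Kaux n N K := by
  have hl : ∀ M ∈ List.ofFn fun i : Fin N => RauxP n N η ξ s i, matDegLE M 1 := by
    intro M hM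
    rw [List.mem_ofFn] at hM
    obtain ⟨i, rfl⟩ := hM
    exact RauxP_degLE n N η ξ s i
  have hdeg : matDegLE (List.ofFn fun i : Fin N => RauxP n N η ξ s i).prod N := by
    simpa using matDegLE_listProd 1 _ hl
  have hmul := coeffM_mul (mapC_degLE (Kaux n N K)) hdeg
  rw [Nat.zero_add] at hmul
  have hprod : coeffM N (List.ofFn fun i : Fin N => RauxP n N η ξ s i).prod
      = ((List.ofFn fun i : Fin N => RauxP n N η ξ s i).map (coeffM 1)).prod := by
    have h := coeffM_listProd 1 _ hl
    simpa using h
  have hone : ((List.ofFn fun i : Fin N => RauxP n N η ξ s i).map (coeffM 1)).prod = 1 := by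
    apply List.prod_eq_one
    intro x hx
    rw [List.map_ofFn, List.mem_ofFn] at hx
    obtain ⟨i, rfl⟩ := hx
    exact RauxP_coeffM n N η ξ s i
  rw [monodromyP, hmul, mapC_coeffM, hprod, hone, mul_one]

/-- Polynomial model of the `j`-th fused monodromy factor. -/
def MauxJP (n N : ℕ) (η : ℂ) (ξ : Fin N → ℂ) (K : Matrix (Fin n) (Fin n) ℂ) (m : ℕ)
    (j : Fin m) :
    Matrix ((Fin m → Fin n) × (Fin N → Fin n)) ((Fin m → Fin n) × (Fin N → Fin n))
      (Polynomial ℂ) :=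
  Matrix.of fun p q =>
    monodromyP n N η ξ K (((j : ℕ) : ℂ) * η) (p.1 j, p.2) (q.1 j, q.2) *
      C (∏ c ∈ Finset.univ.filter (fun c => c ≠ j), if p.1 c = q.1 c then (1 : ℂ) else 0)

lemma MauxJP_eval (n N : ℕ) (η : ℂ) (ξ : Fin N → ℂ) (K : Matrix (Fin n) (Fin n) ℂ) (m : ℕ)
    (j : Fin m) (lam : ℂ) :
    (MauxJP n N η ξ K m j).map (eval lam)
      = MauxJ n N η ξ K m j (lam - ((j : ℕ) : ℂ) * η) := by
  ext p q
  have h := Matrix.ext_iff.2 (monodromyP_eval n N η ξ K (((j : ℕ) : ℂ) * η) lam)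
    (p.1 j, p.2) (q.1 j, q.2)
  rw [Matrix.map_apply] at h
  simp only [MauxJP, MauxJ, Matrix.map_apply, Matrix.of_apply, eval_mul, eval_C, h]

lemma MauxJP_degLE (n N : ℕ) (η : ℂ) (ξ : Fin N → ℂ) (K : Matrix (Fin n) (Fin n) ℂ) (m : ℕ)
    (j : Fin m) : matDegLE (MauxJP n N η ξ K m j) N := by
  intro p q
  simp only [MauxJP, Matrix.of_apply]
  refine le_trans Polynomial.natDegree_mul_le ?_
  rw [Polynomial.natDegree_C, Nat.add_zero]
  exact monodromyP_degLE n N η ξ K _ _ _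

/-- Tensoring with the identity on the quantum space. -/
def tensId (n N m : ℕ) (A : Matrix (Fin m → Fin n) (Fin m → Fin n) ℂ) :
    Matrix ((Fin m → Fin n) × (Fin N → Fin n)) ((Fin m → Fin n) × (Fin N → Fin n)) ℂ :=
  Matrix.of fun p q => A p.1 q.1 * if p.2 = q.2 then (1 : ℂ) else 0

lemma tensId_one (n N m : ℕ) : tensId n N m 1 = 1 := by
  ext p q
  simp only [tensId, Matrix.of_apply, Matrix.one_apply, Prod.ext_iff]
  by_cases h1 : p.1 = q.1 <;> by_cases h2 : p.2 = q.2 <;> simp [h1, h2]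

lemma tensId_mul (n N m : ℕ) (A B : Matrix (Fin m → Fin n) (Fin m → Fin n) ℂ) :
    tensId n N m A * tensId n N m B = tensId n N m (A * B) := by
  ext p q
  rw [Matrix.mul_apply, Fintype.sum_prod_type]
  simp only [tensId, Matrix.of_apply, Matrix.mul_apply]
  have inner : ∀ u : Fin m → Fin n,
      (∑ z : Fin N → Fin n, (A p.1 u * if p.2 = z then (1 : ℂ) else 0) *
        (B u q.1 * if z = q.2 then (1 : ℂ) else 0))
      = A p.1 u * B u q.1 * if p.2 = q.2 then (1 : ℂ) else 0 := by
    intro u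
    rw [Finset.sum_eq_single p.2]
    · simp [mul_assoc, mul_comm, mul_left_comm]
    · intro z _ hz
      simp [Ne.symm hz]
    · simp
  rw [Finset.sum_congr rfl fun u _ => inner u, ← Finset.sum_mul]

lemma tensId_listProd (n N m : ℕ) :
    ∀ l : List (Matrix (Fin m → Fin n) (Fin m → Fin n) ℂ),
      (l.map (tensId n N m)).prod = tensId n N m l.prod
  | [] => by simp [tensId_one]
  | M :: t => by
    rw [List.map_cons, List.prod_cons, List.prod_cons, tensId_listProd n N m t, tensId_mul]

/-- The twist matrix acting on the `j`-th tensor factor of `(ℂ^n)^{⊗m}`. -/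
def Kfac (n : ℕ) (K : Matrix (Fin n) (Fin n) ℂ) (m : ℕ) (j : Fin m) :
    Matrix (Fin m → Fin n) (Fin m → Fin n) ℂ :=
  Matrix.of fun v w =>
    K (v j) (w j) * ∏ c ∈ Finset.univ.filter (fun c => c ≠ j), if v c = w c then (1 : ℂ) else 0

lemma MauxJP_coeffM (n N : ℕ) (η : ℂ) (ξ : Fin N → ℂ) (K : Matrix (Fin n) (Fin n) ℂ) (m : ℕ)
    (j : Fin m) : coeffM N (MauxJP n N η ξ K m j) = tensId n N m (Kfac n K m j) := by
  ext p q
  have h : (monodromyP n N η ξ K (((j : ℕ) : ℂ) * η) (p.1 j, p.2) (q.1 j, q.2)).coeff N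
      = Kaux n N K (p.1 j, p.2) (q.1 j, q.2) := by
    have h' := Matrix.ext_iff.2 (monodromyP_coeffM n N η ξ K (((j : ℕ) : ℂ) * η))
      (p.1 j, p.2) (q.1 j, q.2)
    simpa [coeffM, Matrix.map_apply] using h'
  simp only [coeffM, Matrix.map_apply, MauxJP, Matrix.of_apply, Polynomial.coeff_mul_C, h,
    tensId, Kfac, Kaux]
  ring

lemma Kfac_prod_aux (n m : ℕ) (K : Matrix (Fin n) (Fin n) ℂ) :
    ∀ l : List (Fin m), l.Nodup →
      (l.map (Kfac n K m)).prod = Matrix.of fun v w =>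
        (∏ j ∈ l.toFinset, K (v j) (w j)) *
          ∏ c ∈ l.toFinsetᶜ, if v c = w c then (1 : ℂ) else 0
  | [], _ => by
    ext v w
    rw [List.map_nil, List.prod_nil, Matrix.one_apply, Matrix.of_apply, List.toFinset_nil,
      Finset.prod_empty, one_mul, Finset.compl_empty, Finset.prod_boole]
    simp [funext_iff]
  | j :: t, hnd => by
    have hj : j ∉ t := (List.nodup_cons.1 hnd).1
    have hjf : j ∉ t.toFinset := by simpa using hj
    have ht : t.Nodup := (List.nodup_cons.1 hnd).2
    ext v w
    rw [List.map_cons, List.prod_cons, Kfac_prod_aux n m K t ht, Matrix.mul_apply]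
    have step1 : ∀ u : Fin m → Fin n,
        Kfac n K m j v u * (Matrix.of fun v w =>
          (∏ i ∈ t.toFinset, K (v i) (w i)) *
            ∏ c ∈ t.toFinsetᶜ, if v c = w c then (1 : ℂ) else 0) u w
        = (∏ c ∈ Finset.univ.filter (fun c => c ≠ j), if v c = u c then (1 : ℂ) else 0) *
            (K (v j) (u j) * ((∏ i ∈ t.toFinset, K (u i) (w i)) *
              ∏ c ∈ t.toFinsetᶜ, if u c = w c then (1 : ℂ) else 0)) := by
      intro u
      simp only [Kfac, Matrix.of_apply]
      ring
    rw [Finset.sum_congr rfl fun u _ => step1 u, sum_delta_update]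
    have step2 : ∀ a : Fin n,
        K (v j) (Function.update v j a j) * ((∏ i ∈ t.toFinset,
            K (Function.update v j a i) (w i)) *
          ∏ c ∈ t.toFinsetᶜ, if Function.update v j a c = w c then (1 : ℂ) else 0)
        = (if a = w j then (1 : ℂ) else 0) *
            (K (v j) a * ((∏ i ∈ t.toFinset, K (v i) (w i)) *
              ∏ c ∈ t.toFinsetᶜ.erase j, if v c = w c then (1 : ℂ) else 0)) := by
      intro a
      have h1 : (∏ i ∈ t.toFinset, K (Function.update v j a i) (w i))
          = ∏ i ∈ t.toFinset, K (v i) (w i) :=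
        Finset.prod_congr rfl fun i hi => by
          rw [Function.update_of_ne (fun h => hjf (by rw [← h]; exact hi))]
      have hjc : j ∈ t.toFinsetᶜ := Finset.mem_compl.2 hjf
      have h2 : (∏ c ∈ t.toFinsetᶜ, if Function.update v j a c = w c then (1 : ℂ) else 0)
          = (if a = w j then (1 : ℂ) else 0) *
            ∏ c ∈ t.toFinsetᶜ.erase j, if v c = w c then (1 : ℂ) else 0 := by
        rw [← Finset.mul_prod_erase _ _ hjc, Function.update_self]
        congr 1
        exact Finset.prod_congr rfl fun c hc => by
          rw [Function.update_of_ne (Finset.ne_of_mem_erase hc)]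
      rw [Function.update_self, h1, h2]
      ring
    rw [Finset.sum_congr rfl fun a _ => step2 a]
    simp only [ite_mul, one_mul, zero_mul, Finset.sum_ite_eq', Finset.mem_univ, if_true]
    rw [Matrix.of_apply, List.toFinset_cons, Finset.prod_insert hjf, Finset.compl_insert]
    ring

lemma Kfac_prod (n m : ℕ) (K : Matrix (Fin n) (Fin n) ℂ) :
    ((List.finRange m).map (Kfac n K m)).prod = Ktensor n K m := by
  rw [Kfac_prod_aux n m K _ (List.nodup_finRange m)]
  ext v w
  simp [Ktensor]

/-- Polynomial model of the full fused product. -/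
def PtotalP (n N : ℕ) (η : ℂ) (ξ : Fin N → ℂ) (K : Matrix (Fin n) (Fin n) ℂ) (m : ℕ) :
    Matrix ((Fin m → Fin n) × (Fin N → Fin n)) ((Fin m → Fin n) × (Fin N → Fin n))
      (Polynomial ℂ) :=
  (antisymH n N m).map C * (List.ofFn fun j : Fin m => MauxJP n N η ξ K m j).prod

lemma PtotalP_eval (n N : ℕ) (η : ℂ) (ξ : Fin N → ℂ) (K : Matrix (Fin n) (Fin n) ℂ) (m : ℕ)
    (lam : ℂ) :
    (PtotalP n N η ξ K m).map (eval lam)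
      = antisymH n N m *
        (List.ofFn fun j : Fin m => MauxJ n N η ξ K m j (lam - ((j : ℕ) : ℂ) * η)).prod := by
  rw [PtotalP, ← Polynomial.coe_evalRingHom, ← RingHom.mapMatrix_apply, _root_.map_mul,
    map_list_prod, List.map_ofFn]
  congr 1
  · rw [RingHom.mapMatrix_apply]
    ext p q
    simp [Matrix.map_apply]
  · congr 1
    congr 1
    funext j
    show (Polynomial.evalRingHom lam).mapMatrix (MauxJP n N η ξ K m j) = _
    rw [RingHom.mapMatrix_apply, Polynomial.coe_evalRingHom, MauxJP_eval]

lemma PtotalP_degLE (n N : ℕ) (η : ℂ) (ξ : Fin N → ℂ) (K : Matrix (Fin n) (Fin n) ℂ)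
    (m : ℕ) : matDegLE (PtotalP n N η ξ K m) (m * N) := by
  have hl : ∀ M ∈ List.ofFn fun j : Fin m => MauxJP n N η ξ K m j, matDegLE M N := by
    intro M hM
    rw [List.mem_ofFn] at hM
    obtain ⟨j, rfl⟩ := hM
    exact MauxJP_degLE n N η ξ K m j
  have hd := matDegLE_listProd N _ hl
  have h := matDegLE_mul (mapC_degLE (antisymH n N m)) hd
  have he : 0 + N * (List.ofFn fun j : Fin m => MauxJP n N η ξ K m j).length = m * N := by
    simp [List.length_ofFn, Nat.mul_comm]
  rw [PtotalP]
  exact he ▸ h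

lemma PtotalP_coeffM (n N : ℕ) (η : ℂ) (ξ : Fin N → ℂ) (K : Matrix (Fin n) (Fin n) ℂ)
    (m : ℕ) :
    coeffM (m * N) (PtotalP n N η ξ K m) = tensId n N m (antisym n m * Ktensor n K m) := by
  have hl : ∀ M ∈ List.ofFn fun j : Fin m => MauxJP n N η ξ K m j, matDegLE M N := by
    intro M hM
    rw [List.mem_ofFn] at hM
    obtain ⟨j, rfl⟩ := hM
    exact MauxJP_degLE n N η ξ K m j
  have hd := matDegLE_listProd N _ hl
  have he : N * (List.ofFn fun j : Fin m => MauxJP n N η ξ K m j).length = m * N := by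
    simp [List.length_ofFn, Nat.mul_comm]
  have hd' : matDegLE (List.ofFn fun j : Fin m => MauxJP n N η ξ K m j).prod (m * N) :=
    he ▸ hd
  have hmul := coeffM_mul (mapC_degLE (antisymH n N m)) hd'
  rw [Nat.zero_add] at hmul
  have hprod : coeffM (m * N) (List.ofFn fun j : Fin m => MauxJP n N η ξ K m j).prod
      = (List.ofFn fun j : Fin m => tensId n N m (Kfac n K m j)).prod := by
    have h := coeffM_listProd N _ hl
    rw [he] at h
    rw [h, List.map_ofFn]
    congr 1
    congr 1
    funext j
    show coeffM N (MauxJP n N η ξ K m j) = _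
    exact MauxJP_coeffM n N η ξ K m j
  have hK : (List.ofFn fun j : Fin m => tensId n N m (Kfac n K m j)).prod
      = tensId n N m (Ktensor n K m) := by
    have h1 : (List.ofFn fun j : Fin m => tensId n N m (Kfac n K m j))
        = ((List.finRange m).map (Kfac n K m)).map (tensId n N m) := by
      rw [List.map_map, List.ofFn_eq_map]
      rfl
    rw [h1, tensId_listProd, Kfac_prod]
  have hA : antisymH n N m = tensId n N m (antisym n m) := rfl
  rw [PtotalP, hmul, mapC_coeffM, hprod, hK, hA, tensId_mul]

/-- each fused transfer matrix is polynomial in the spectral parameter of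
degree `m·N` with central leading coefficient `tr(P⁻_{1…m} K₁⋯K_m)·Id`. -/
theorem transfer_polynomial (n N : ℕ) (hn : 1 ≤ n) (hN : 1 ≤ N) (η : ℂ) (ξ : Fin N → ℂ)
    (K : Matrix (Fin n) (Fin n) ℂ) :
    ∀ m : ℕ, 1 ≤ m → m ≤ n →
      ∃ A : ℕ → Matrix (Fin N → Fin n) (Fin N → Fin n) ℂ,
        (∀ lam : ℂ,
          transfer n N η ξ K m lam = ∑ k ∈ Finset.range (m * N + 1), lam ^ k • A k) ∧
        A (m * N) = asymCoef n K m • (1 : Matrix (Fin N → Fin n) (Fin N → Fin n) ℂ) := by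
  intro m _hm _hmn
  refine ⟨fun k => Matrix.of fun x y =>
      ∑ v : Fin m → Fin n, (PtotalP n N η ξ K m (v, x) (v, y)).coeff k, ?_, ?_⟩
  · intro lam
    ext x y
    have hmap := Matrix.ext_iff.2 (PtotalP_eval n N η ξ K m lam)
    calc transfer n N η ξ K m lam x y
        = ∑ v : Fin m → Fin n,
            (antisymH n N m *
              (List.ofFn fun j : Fin m =>
                MauxJ n N η ξ K m j (lam - ((j : ℕ) : ℂ) * η)).prod) (v, x) (v, y) := rfl
      _ = ∑ v : Fin m → Fin n, eval lam (PtotalP n N η ξ K m (v, x) (v, y)) := by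
          refine Finset.sum_congr rfl fun v _ => ?_
          rw [← hmap (v, x) (v, y), Matrix.map_apply]
      _ = ∑ v : Fin m → Fin n, ∑ k ∈ Finset.range (m * N + 1),
            (PtotalP n N η ξ K m (v, x) (v, y)).coeff k * lam ^ k := by
          refine Finset.sum_congr rfl fun v _ => ?_
          exact Polynomial.eval_eq_sum_range'
            (Nat.lt_succ_of_le (PtotalP_degLE n N η ξ K m _ _)) lam
      _ = (∑ k ∈ Finset.range (m * N + 1), lam ^ k • (Matrix.of fun x y =>
            ∑ v : Fin m → Fin n, (PtotalP n N η ξ K m (v, x) (v, y)).coeff k :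
              Matrix (Fin N → Fin n) (Fin N → Fin n) ℂ)) x y := by
          rw [Finset.sum_comm, Matrix.sum_apply]
          refine Finset.sum_congr rfl fun k _ => ?_
          rw [Matrix.smul_apply, Matrix.of_apply, smul_eq_mul, Finset.mul_sum]
          exact Finset.sum_congr rfl fun v _ => mul_comm _ _
  · ext x y
    have key : ∀ v : Fin m → Fin n, (PtotalP n N η ξ K m (v, x) (v, y)).coeff (m * N)
        = (antisym n m * Ktensor n K m) v v * (if x = y then (1 : ℂ) else 0) := by
      intro v
      have h := Matrix.ext_iff.2 (PtotalP_coeffM n N η ξ K m) (v, x) (v, y)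
      simpa [coeffM, Matrix.map_apply, tensId] using h
    dsimp only
    rw [Matrix.of_apply, Finset.sum_congr rfl fun v _ => key v, ← Finset.sum_mul,
      Matrix.smul_apply, Matrix.one_apply, smul_eq_mul]
    congr 1

end GLnSoV
end
end

section
/- The quantum determinant is the explicit central scalar function: for all λ ∈ ℂ, T_n^{(K)}(λ) = det K · ∏_{b=1}^N [ (λ − ξ_b + η) ∏_{m=1}^{n−1} (λ − ξ_b − mη) ] · Id_H. -/
open Matrix BigOperators

noncomputable section

namespace GLnSoV

/-! ### Generic boolean/sum helpers -/

lemma boole_and (p q : Prop) [Decidable p] [Decidable q] :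
    (if p then (1:ℂ) else 0) * (if q then (1:ℂ) else 0) = if p ∧ q then 1 else 0 := by
  by_cases hp : p <;> by_cases hq : q <;> simp [hp, hq]

lemma sum_update {ι α : Type*} [Fintype ι] [DecidableEq ι] [Fintype α] [DecidableEq α]
    (j : ι) (u : ι → α) (F : (ι → α) → ℂ) :
    ∑ v : ι → α, (if ∀ c, c ≠ j → u c = v c then (1:ℂ) else 0) * F v
      = ∑ a : α, F (Function.update u j a) := by
  classical
  have himg : (Finset.univ.filter (fun v : ι → α => ∀ c, c ≠ j → u c = v c))
      = Finset.univ.image (fun a => Function.update u j a) := by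
    ext v
    simp only [Finset.mem_filter, Finset.mem_image, Finset.mem_univ, true_and]
    constructor
    · intro h
      refine ⟨v j, ?_⟩
      funext c
      by_cases hc : c = j
      · subst hc; simp
      · rw [Function.update_of_ne hc]; exact h c hc
    · rintro ⟨a, rfl⟩ c hc
      exact (Function.update_of_ne hc a u).symm
  have hinj : Function.Injective (fun a => Function.update u j a) := by
    intro a b h
    have := congrFun h j
    simpa using this
  calc ∑ v : ι → α, (if ∀ c, c ≠ j → u c = v c then (1:ℂ) else 0) * F v
      = ∑ v : ι → α, (if ∀ c, c ≠ j → u c = v c then F v else 0) := by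
        simp [boole_mul]
    _ = ∑ v ∈ Finset.univ.filter (fun v : ι → α => ∀ c, c ≠ j → u c = v c), F v := by
        rw [Finset.sum_filter]
    _ = ∑ a : α, F (Function.update u j a) := by
        rw [himg, Finset.sum_image (fun a _ b _ h => hinj h)]

/-- Collapse a sum whose boolean condition pins the variable to a point. -/
lemma sum_collapse_point {β : Type*} [Fintype β] [DecidableEq β]
    (Q : β → Prop) [DecidablePred Q] (C : Prop) [Decidable C] (v₀ : β)
    (h : ∀ v, Q v ↔ C ∧ v = v₀) (F : β → ℂ) :
    ∑ v : β, (if Q v then (1:ℂ) else 0) * F v = (if C then 1 else 0) * F v₀ := by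
  simp only [h, boole_mul]
  by_cases hC : C
  · simp only [hC, true_and, boole_mul]
    rw [Finset.sum_ite_eq' Finset.univ v₀ F]
    simp
  · simp [hC]

/-- Collapse a sum whose boolean condition leaves exactly one free coordinate. -/
lemma sum_collapse_free {ι α : Type*} [Fintype ι] [DecidableEq ι] [Fintype α] [DecidableEq α]
    (j : ι) (u : ι → α) (Q : (ι → α) → Prop) [DecidablePred Q] (C : Prop) [Decidable C]
    (h : ∀ v, Q v ↔ C ∧ ∀ c, c ≠ j → u c = v c) (F : (ι → α) → ℂ) :
    ∑ v : ι → α, (if Q v then (1:ℂ) else 0) * F v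
      = (if C then 1 else 0) * ∑ a : α, F (Function.update u j a) := by
  simp only [h]
  by_cases hC : C
  · simp only [hC, true_and]
    rw [if_pos trivial, one_mul]
    exact sum_update j u F
  · simp [hC]

/-! ### The antisymmetric sign function `epsv` -/

def epsv {n : ℕ} (u : Fin n → Fin n) : ℂ :=
  ∑ σ : Equiv.Perm (Fin n), ((Equiv.Perm.sign σ : ℤ) : ℂ) * (if u = ⇑σ then 1 else 0)

lemma epsv_perm {n : ℕ} (σ : Equiv.Perm (Fin n)) :
    epsv ⇑σ = ((Equiv.Perm.sign σ : ℤ) : ℂ) := by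
  unfold epsv
  rw [Finset.sum_eq_single σ]
  · simp
  · intro τ _ hτ
    have : ⇑σ ≠ ⇑τ := fun h => hτ (DFunLike.coe_injective h).symm
    simp [this]
  · simp

lemma epsv_nonbij {n : ℕ} {u : Fin n → Fin n} (h : ¬ Function.Bijective u) : epsv u = 0 := by
  unfold epsv
  apply Finset.sum_eq_zero
  intro σ _
  have : u ≠ ⇑σ := fun he => h (he ▸ σ.bijective)
  simp [this]

lemma epsv_eq_det {n : ℕ} (u : Fin n → Fin n) :
    epsv u = (Matrix.of fun i j => if u i = j then (1:ℂ) else 0).det := by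
  rw [Matrix.det_apply]
  have : ∀ σ : Equiv.Perm (Fin n),
      (∏ i : Fin n, (Matrix.of fun i j => if u i = j then (1:ℂ) else 0) (σ i) i)
        = if u = ⇑σ⁻¹ then 1 else 0 := by
    intro σ
    simp only [Matrix.of_apply]
    rw [Finset.prod_boole]
    congr 1
    simp only [eq_iff_iff]
    constructor
    · intro h
      funext j
      have := h (σ⁻¹ j) (Finset.mem_univ _)
      simpa using this
    · intro h i _
      rw [h]; simp
  rw [Finset.sum_congr rfl (fun σ _ => by rw [this σ])]
  rw [← Equiv.sum_comp (Equiv.inv (Equiv.Perm (Fin n)))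
    (fun σ => Equiv.Perm.sign σ • (if u = ⇑σ⁻¹ then (1:ℂ) else 0))]
  unfold epsv
  apply Finset.sum_congr rfl
  intro σ _
  simp [Units.smul_def, zsmul_eq_mul, Equiv.inv_apply]

lemma epsv_update_sum {n : ℕ} (u : Fin n → Fin n) (s t : Fin n) :
    ∑ i : Fin n, (if u i = t then (1:ℂ) else 0) * epsv (Function.update u i s)
      = epsv u * (if s = t then 1 else 0) := by
  classical
  set M : Matrix (Fin n) (Fin n) ℂ := Matrix.of fun i j => if u i = j then (1:ℂ) else 0 with hM
  have hadj : ∀ i, epsv (Function.update u i s) = M.adjugate s i := by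
    intro i
    rw [Matrix.adjugate_apply, epsv_eq_det]
    congr 1
    ext i' j
    by_cases hi : i' = i
    · subst hi
      rw [Matrix.updateRow_self]
      simp only [Matrix.of_apply, Function.update_self, Pi.single_apply]
      exact if_congr (by constructor <;> (intro h; exact h.symm)) rfl rfl
    · rw [Matrix.updateRow_ne hi]
      simp only [hM, Matrix.of_apply, Function.update_of_ne hi]
  calc ∑ i : Fin n, (if u i = t then (1:ℂ) else 0) * epsv (Function.update u i s)
      = ∑ i : Fin n, M.adjugate s i * M i t := by
        apply Finset.sum_congr rfl
        intro i _
        rw [hadj i, mul_comm]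
        rfl
    _ = (M.adjugate * M) s t := (Matrix.mul_apply).symm
    _ = (M.det • (1 : Matrix (Fin n) (Fin n) ℂ)) s t := by rw [Matrix.adjugate_mul]
    _ = epsv u * (if s = t then 1 else 0) := by
        rw [Matrix.smul_apply, Matrix.one_apply, epsv_eq_det, smul_eq_mul, hM]

lemma sum_epsv_mul {n : ℕ} (P : (Fin n → Fin n) → ℂ) :
    ∑ w : Fin n → Fin n, epsv w * P w
      = ∑ σ : Equiv.Perm (Fin n), ((Equiv.Perm.sign σ : ℤ) : ℂ) * P ⇑σ := by
  unfold epsv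
  simp only [Finset.sum_mul]
  rw [Finset.sum_comm]
  apply Finset.sum_congr rfl
  intro σ _
  have : ∀ w : Fin n → Fin n,
      ((Equiv.Perm.sign σ : ℤ) : ℂ) * (if w = ⇑σ then 1 else 0) * P w
        = if w = ⇑σ then ((Equiv.Perm.sign σ : ℤ) : ℂ) * P w else 0 := by
    intro w
    by_cases h : w = ⇑σ <;> simp [h]
  rw [Finset.sum_congr rfl (fun w _ => this w)]
  rw [Finset.sum_ite_eq' Finset.univ (⇑σ) (fun w => ((Equiv.Perm.sign σ : ℤ) : ℂ) * P w)]
  simp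

lemma epsv_sq_sum (n : ℕ) :
    ∑ w : Fin n → Fin n, epsv w * epsv w = (n.factorial : ℂ) := by
  rw [sum_epsv_mul (fun w => epsv w)]
  have : ∀ σ : Equiv.Perm (Fin n),
      ((Equiv.Perm.sign σ : ℤ) : ℂ) * epsv ⇑σ = 1 := by
    intro σ
    rw [epsv_perm]
    rcases Int.units_eq_one_or (Equiv.Perm.sign σ) with h | h <;> rw [h] <;> norm_num
  rw [Finset.sum_congr rfl (fun σ _ => this σ)]
  simp [Fintype.card_perm, Fintype.card_fun]

lemma epsv_mul_K_sum {n : ℕ} (K : Matrix (Fin n) (Fin n) ℂ) (u : Fin n → Fin n) :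
    ∑ w : Fin n → Fin n, epsv w * ∏ j, K (u j) (w j) = K.det * epsv u := by
  classical
  rw [sum_epsv_mul (fun w => ∏ j, K (u j) (w j))]
  have key : ∑ σ : Equiv.Perm (Fin n), ((Equiv.Perm.sign σ : ℤ) : ℂ) * ∏ j, K (u j) (σ j)
      = ((K.submatrix u id)ᵀ).det := by
    rw [Matrix.det_apply]
    apply Finset.sum_congr rfl
    intro σ _
    rw [Units.smul_def, zsmul_eq_mul]
    rfl
  rw [key, Matrix.det_transpose]
  by_cases hb : Function.Bijective u
  · have hρ : ⇑(Equiv.ofBijective u hb) = u := rfl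
    rw [← hρ, Matrix.det_permute, epsv_perm]
    ring
  · rw [epsv_nonbij hb, mul_zero]
    have hni : ¬ Function.Injective u := fun hinj => hb ((Finite.injective_iff_bijective).1 hinj)
    rw [Function.not_injective_iff] at hni
    obtain ⟨i, j, hij, hne⟩ := hni
    apply Matrix.det_zero_of_row_eq hne
    funext c
    simp [Matrix.submatrix_apply, hij]



section MonoidReorder

variable {M : Type*} [Monoid M]

lemma commute_ofFn_prod {m : ℕ} {x : M} {f : Fin m → M}
    (h : ∀ i, Commute x (f i)) : Commute x (List.ofFn f).prod := by
  apply Commute.list_prod_right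
  intro y hy
  rw [List.mem_ofFn] at hy
  obtain ⟨i, rfl⟩ := hy
  exact h i

lemma zip_prod : ∀ {N : ℕ} (f g : Fin N → M),
    (∀ b b', b ≠ b' → Commute (g b) (f b')) →
    (List.ofFn f).prod * (List.ofFn g).prod = (List.ofFn fun b => f b * g b).prod := by
  intro N
  induction N with
  | zero => intro f g _; simp
  | succ N ih =>
    intro f g hcomm
    rw [List.ofFn_succ (f := f), List.ofFn_succ (f := g),
      List.ofFn_succ (f := fun b => f b * g b)]
    simp only [List.prod_cons]
    have h1 : Commute (g 0) (List.ofFn fun i : Fin N => f i.succ).prod := by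
      apply commute_ofFn_prod
      intro i
      exact hcomm 0 i.succ (Fin.succ_ne_zero i).symm
    calc f 0 * (List.ofFn fun i : Fin N => f i.succ).prod
          * (g 0 * (List.ofFn fun i : Fin N => g i.succ).prod)
        = f 0 * ((List.ofFn fun i : Fin N => f i.succ).prod * g 0)
          * (List.ofFn fun i : Fin N => g i.succ).prod := by
          simp [mul_assoc]
      _ = f 0 * (g 0 * (List.ofFn fun i : Fin N => f i.succ).prod)
          * (List.ofFn fun i : Fin N => g i.succ).prod := by rw [← h1.eq]
      _ = (f 0 * g 0) * ((List.ofFn fun i : Fin N => f i.succ).prod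
          * (List.ofFn fun i : Fin N => g i.succ).prod) := by simp [mul_assoc]
      _ = (f 0 * g 0) * (List.ofFn fun b : Fin N => f b.succ * g b.succ).prod := by
          rw [ih (fun b => f b.succ) (fun b => g b.succ)
            (fun b b' hbb' => hcomm b.succ b'.succ (by simpa [Fin.succ_inj] using hbb'))]

lemma reorder_prod : ∀ {n : ℕ} {N : ℕ} (k : Fin n → M) (X : Fin n → Fin N → M),
    (∀ j j' b, j ≠ j' → Commute (k j) (X j' b)) →
    (∀ j j' b b', j ≠ j' → b ≠ b' → Commute (X j b) (X j' b')) →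
    (List.ofFn fun j => k j * (List.ofFn (X j)).prod).prod
      = (List.ofFn k).prod * (List.ofFn fun b => (List.ofFn fun j => X j b).prod).prod := by
  intro n
  induction n with
  | zero =>
    intro N k X _ _
    simp
  | succ n ih =>
    intro N k X hKX hXX
    rw [List.ofFn_succ (f := fun j => k j * (List.ofFn (X j)).prod),
      List.ofFn_succ (f := k)]
    simp only [List.prod_cons]
    rw [ih (fun j => k j.succ) (fun j => X j.succ)
      (fun j j' b hjj' => hKX j.succ j'.succ b (by simpa [Fin.succ_inj] using hjj'))
      (fun j j' b b' hjj' hbb' => hXX j.succ j'.succ b b'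
        (by simpa [Fin.succ_inj] using hjj') hbb')]
    set A0 := (List.ofFn (X 0)).prod with hA0
    set Kp := (List.ofFn fun j : Fin n => k j.succ).prod with hKp
    set Yp := (List.ofFn fun b : Fin N => (List.ofFn fun j : Fin n => X j.succ b).prod).prod
      with hYp
    have hAK : Commute A0 Kp := by
      apply Commute.list_prod_right
      intro y hy
      rw [List.mem_ofFn] at hy
      obtain ⟨j, rfl⟩ := hy
      apply Commute.list_prod_left
      intro x hx
      rw [List.mem_ofFn] at hx
      obtain ⟨b, rfl⟩ := hx
      exact (hKX j.succ 0 b (Fin.succ_ne_zero j)).symm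
    have hzip : A0 * Yp = (List.ofFn fun b => X 0 b *
        (List.ofFn fun j : Fin n => X j.succ b).prod).prod := by
      rw [hA0, hYp]
      apply zip_prod
      intro b b' hbb'
      apply Commute.list_prod_left
      intro x hx
      rw [List.mem_ofFn] at hx
      obtain ⟨j, rfl⟩ := hx
      exact hXX j.succ 0 b b' (Fin.succ_ne_zero j) hbb'
    calc (k 0 * A0) * (Kp * Yp) = k 0 * ((A0 * Kp) * Yp) := by simp [mul_assoc]
      _ = k 0 * ((Kp * A0) * Yp) := by rw [hAK.eq]
      _ = (k 0 * Kp) * (A0 * Yp) := by simp [mul_assoc]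
      _ = (k 0 * Kp) * (List.ofFn fun b => X 0 b *
          (List.ofFn fun j : Fin n => X j.succ b).prod).prod := by rw [hzip]
      _ = _ := by
          congr 1
          exact congrArg List.prod (congrArg List.ofFn (funext fun b => by
            rw [List.ofFn_succ, List.prod_cons]))

end MonoidReorder

/-! ### Local operators on the fused space -/

section LocalOps

variable {n N : ℕ}

lemma boole_eq {p q : Prop} {ip : Decidable p} {iq : Decidable q} (h : p ↔ q) :
    (@ite ℂ p ip 1 0) = @ite ℂ q iq 1 0 := if_congr h rfl rfl

lemma dOff_eq {ι α : Type*} [Fintype ι] [DecidableEq ι] [DecidableEq α]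
    (j : ι) (u w : ι → α) :
    (∏ c ∈ Finset.univ.filter (fun c => c ≠ j), (if u c = w c then (1:ℂ) else 0))
      = if ∀ c, c ≠ j → u c = w c then 1 else 0 := by
  rw [Finset.prod_boole]
  exact boole_eq (by simp)

/-- Embed an operator on (auxiliary copy `j`) ⊗ (quantum space) into the fused space. -/
def emb (j : Fin n) (A : Matrix (Fin n × (Fin N → Fin n)) (Fin n × (Fin N → Fin n)) ℂ) :
    Matrix ((Fin n → Fin n) × (Fin N → Fin n)) ((Fin n → Fin n) × (Fin N → Fin n)) ℂ :=
  Matrix.of fun p q => A (p.1 j, p.2) (q.1 j, q.2) *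
    ∏ c ∈ Finset.univ.filter (fun c => c ≠ j), (if p.1 c = q.1 c then (1:ℂ) else 0)

lemma MauxJ_eq_emb (η : ℂ) (ξ : Fin N → ℂ) (K : Matrix (Fin n) (Fin n) ℂ)
    (j : Fin n) (lam : ℂ) :
    MauxJ n N η ξ K n j lam = emb j (monodromy n N η ξ K lam) := rfl

lemma emb_one (j : Fin n) : emb (N := N) j 1 = 1 := by
  ext ⟨u, x⟩ ⟨w, y⟩
  simp only [emb, Matrix.of_apply, Matrix.one_apply, dOff_eq, Prod.mk.injEq]
  rw [boole_and]
  apply boole_eq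
  constructor
  · rintro ⟨⟨h1, h2⟩, h3⟩
    refine ⟨funext fun c => ?_, h2⟩
    by_cases hc : c = j
    · subst hc; exact h1
    · exact h3 c hc
  · rintro ⟨h1, h2⟩
    exact ⟨⟨congrFun h1 j, h2⟩, fun c _ => congrFun h1 c⟩

lemma two_constraints_same_iff {ι α : Type*} (j : ι) (u w : ι → α) (v : ι → α) :
    ((∀ c, c ≠ j → u c = v c) ∧ (∀ c, c ≠ j → v c = w c))
      ↔ ((∀ c, c ≠ j → u c = w c) ∧ ∀ c, c ≠ j → u c = v c) := by
  constructor
  · rintro ⟨h1, h2⟩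
    exact ⟨fun c hc => (h1 c hc).trans (h2 c hc), h1⟩
  · rintro ⟨hC, h1⟩
    exact ⟨h1, fun c hc => (h1 c hc).symm.trans (hC c hc)⟩

lemma two_constraints_iff {ι α : Type*} [DecidableEq ι] {j j' : ι} (hjj' : j ≠ j')
    (u w : ι → α) (v : ι → α) :
    ((∀ c, c ≠ j → u c = v c) ∧ (∀ c, c ≠ j' → v c = w c))
      ↔ ((∀ c, c ≠ j → c ≠ j' → u c = w c) ∧ v = Function.update u j (w j)) := by
  constructor
  · rintro ⟨h1, h2⟩
    constructor
    · intro c hc hc'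
      exact (h1 c hc).trans (h2 c hc')
    · funext c
      by_cases hc : c = j
      · rw [hc, Function.update_self]; exact h2 j hjj'
      · rw [Function.update_of_ne hc]; exact (h1 c hc).symm
  · rintro ⟨hC, rfl⟩
    constructor
    · intro c hc
      rw [Function.update_of_ne hc]
    · intro c hc'
      by_cases hc : c = j
      · rw [hc, Function.update_self]
      · rw [Function.update_of_ne hc]
        exact hC c hc hc'

lemma emb_mul (j : Fin n) (A B : Matrix (Fin n × (Fin N → Fin n)) (Fin n × (Fin N → Fin n)) ℂ) :
    emb j (A * B) = emb j A * emb j B := by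
  ext ⟨u, x⟩ ⟨w, y⟩
  rw [Matrix.mul_apply]
  rw [Fintype.sum_prod_type]
  have step1 : ∀ v : Fin n → Fin n,
      (∑ z : Fin N → Fin n, emb j A (u, x) (v, z) * emb j B (v, z) (w, y))
        = (if ((∀ c, c ≠ j → u c = v c) ∧ (∀ c, c ≠ j → v c = w c)) then (1:ℂ) else 0) *
            ∑ z : Fin N → Fin n, A (u j, x) (v j, z) * B (v j, z) (w j, y) := by
    intro v
    rw [Finset.mul_sum]
    apply Finset.sum_congr rfl
    intro z _
    simp only [emb, Matrix.of_apply, dOff_eq]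
    rw [← boole_and]
    ring_nf
  rw [Finset.sum_congr rfl (fun v _ => step1 v)]
  rw [sum_collapse_free j u
    (fun v => (∀ c, c ≠ j → u c = v c) ∧ (∀ c, c ≠ j → v c = w c))
    (∀ c, c ≠ j → u c = w c)
    (fun v => two_constraints_same_iff j u w v)
    (fun v => ∑ z : Fin N → Fin n, A (u j, x) (v j, z) * B (v j, z) (w j, y))]
  have : ∀ a : Fin n, (∑ z : Fin N → Fin n,
      A (u j, x) ((Function.update u j a) j, z) * B ((Function.update u j a) j, z) (w j, y))
        = ∑ z : Fin N → Fin n, A (u j, x) (a, z) * B (a, z) (w j, y) := by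
    intro a
    simp [Function.update_self]
  rw [Finset.sum_congr rfl (fun a _ => this a)]
  simp only [emb, Matrix.of_apply, dOff_eq]
  rw [Matrix.mul_apply, Fintype.sum_prod_type]
  ring_nf

lemma emb_prod (j : Fin n)
    (l : List (Matrix (Fin n × (Fin N → Fin n)) (Fin n × (Fin N → Fin n)) ℂ)) :
    emb j l.prod = (l.map (emb j)).prod := by
  induction l with
  | nil => simpa using emb_one j
  | cons a t ih => rw [List.prod_cons, emb_mul, ih, List.map_cons, List.prod_cons]

lemma MauxJ_factor (η : ℂ) (ξ : Fin N → ℂ) (K : Matrix (Fin n) (Fin n) ℂ)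
    (j : Fin n) (lam : ℂ) :
    MauxJ n N η ξ K n j lam
      = emb j (Kaux n N K)
        * (List.ofFn fun b : Fin N => emb j (Raux n N η (lam - ξ b.rev) b.rev)).prod := by
  rw [MauxJ_eq_emb, monodromy, emb_mul, emb_prod, List.map_ofFn]
  rfl

lemma Rmat_apply (η μ : ℂ) (p q : Fin n × Fin n) :
    Rmat n η μ p q = μ * (if p = q then 1 else 0)
      + η * (if p.1 = q.2 ∧ p.2 = q.1 then 1 else 0) := by
  simp [Rmat, permOp, Matrix.add_apply, Matrix.smul_apply, Matrix.one_apply, smul_eq_mul]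

lemma embK_apply (K : Matrix (Fin n) (Fin n) ℂ) (u w : Fin n → Fin n)
    (x y : Fin N → Fin n) (j : Fin n) :
    emb j (Kaux n N K) (u, x) (w, y)
      = K (u j) (w j) * (if x = y then 1 else 0)
          * (if ∀ c, c ≠ j → u c = w c then 1 else 0) := by
  simp only [emb, Matrix.of_apply, Kaux, dOff_eq]
  congr!

lemma embR_apply (η μ : ℂ) (b : Fin N) (u w : Fin n → Fin n)
    (x y : Fin N → Fin n) (j : Fin n) :
    emb j (Raux n N η μ b) (u, x) (w, y)
      = Rmat n η μ (u j, x b) (w j, y b)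
          * (if ∀ c, c ≠ b → x c = y c then 1 else 0)
          * (if ∀ c, c ≠ j → u c = w c then 1 else 0) := by
  simp only [emb, Matrix.of_apply, Raux, dOff_eq]
  congr!

end LocalOps

section ClosedForms

variable {n N : ℕ}

lemma embR_mul_embR {j j' : Fin n} (hj : j ≠ j') {b b' : Fin N} (hb : b ≠ b') (η μ μ' : ℂ) :
    emb j (Raux n N η μ b) * emb j' (Raux n N η μ' b')
      = Matrix.of fun p q =>
          Rmat n η μ (p.1 j, p.2 b) (q.1 j, q.2 b)
          * Rmat n η μ' (p.1 j', p.2 b') (q.1 j', q.2 b')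
          * (if ∀ c, c ≠ j → c ≠ j' → p.1 c = q.1 c then (1:ℂ) else 0)
          * (if ∀ c, c ≠ b → c ≠ b' → p.2 c = q.2 c then (1:ℂ) else 0) := by
  ext ⟨u, x⟩ ⟨w, y⟩
  rw [Matrix.mul_apply, Fintype.sum_prod_type]
  have step1 : ∀ v : Fin n → Fin n,
      (∑ z : Fin N → Fin n,
        emb j (Raux n N η μ b) (u, x) (v, z) * emb j' (Raux n N η μ' b') (v, z) (w, y))
      = (if ((∀ c, c ≠ j → u c = v c) ∧ (∀ c, c ≠ j' → v c = w c)) then (1:ℂ) else 0) *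
        ∑ z : Fin N → Fin n,
          (if ((∀ c, c ≠ b → x c = z c) ∧ (∀ c, c ≠ b' → z c = y c)) then (1:ℂ) else 0) *
            (Rmat n η μ (u j, x b) (v j, z b) * Rmat n η μ' (v j', z b') (w j', y b')) := by
    intro v
    rw [Finset.mul_sum]
    apply Finset.sum_congr rfl
    intro z _
    simp only [embR_apply]
    rw [← boole_and, ← boole_and]
    ring_nf
  rw [Finset.sum_congr rfl (fun v _ => step1 v)]
  have step2 : ∀ v : Fin n → Fin n,
      (∑ z : Fin N → Fin n,
          (if ((∀ c, c ≠ b → x c = z c) ∧ (∀ c, c ≠ b' → z c = y c)) then (1:ℂ) else 0) *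
            (Rmat n η μ (u j, x b) (v j, z b) * Rmat n η μ' (v j', z b') (w j', y b')))
      = (if ∀ c, c ≠ b → c ≠ b' → x c = y c then (1:ℂ) else 0) *
          (Rmat n η μ (u j, x b) (v j, y b) * Rmat n η μ' (v j', x b') (w j', y b')) := by
    intro v
    rw [sum_collapse_point _ (∀ c, c ≠ b → c ≠ b' → x c = y c) (Function.update x b (y b))
      (fun z => two_constraints_iff hb x y z)
      (fun z => Rmat n η μ (u j, x b) (v j, z b) * Rmat n η μ' (v j', z b') (w j', y b'))]
    rw [Function.update_self, Function.update_of_ne (Ne.symm hb)]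
  rw [Finset.sum_congr rfl (fun v _ => by rw [step2 v])]
  have step3 :
      (∑ v : Fin n → Fin n,
        (if ((∀ c, c ≠ j → u c = v c) ∧ (∀ c, c ≠ j' → v c = w c)) then (1:ℂ) else 0) *
          ((if ∀ c, c ≠ b → c ≠ b' → x c = y c then (1:ℂ) else 0) *
            (Rmat n η μ (u j, x b) (v j, y b) * Rmat n η μ' (v j', x b') (w j', y b'))))
      = (if ∀ c, c ≠ j → c ≠ j' → u c = w c then (1:ℂ) else 0) *
          ((if ∀ c, c ≠ b → c ≠ b' → x c = y c then (1:ℂ) else 0) *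
            (Rmat n η μ (u j, x b) (w j, y b) * Rmat n η μ' (u j', x b') (w j', y b'))) := by
    rw [sum_collapse_point _ (∀ c, c ≠ j → c ≠ j' → u c = w c) (Function.update u j (w j))
      (fun v => two_constraints_iff hj u w v)
      (fun v => (if ∀ c, c ≠ b → c ≠ b' → x c = y c then (1:ℂ) else 0) *
        (Rmat n η μ (u j, x b) (v j, y b) * Rmat n η μ' (v j', x b') (w j', y b')))]
    rw [Function.update_self, Function.update_of_ne (Ne.symm hj)]
  rw [step3]
  simp only [Matrix.of_apply]
  ring

lemma embK_mul_embR (K : Matrix (Fin n) (Fin n) ℂ) {j j' : Fin n} (hj : j ≠ j')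
    (b : Fin N) (η μ : ℂ) :
    emb j (Kaux n N K) * emb j' (Raux n N η μ b)
      = Matrix.of fun p q =>
          K (p.1 j) (q.1 j) * Rmat n η μ (p.1 j', p.2 b) (q.1 j', q.2 b)
          * (if ∀ c, c ≠ j → c ≠ j' → p.1 c = q.1 c then (1:ℂ) else 0)
          * (if ∀ c, c ≠ b → p.2 c = q.2 c then (1:ℂ) else 0) := by
  ext ⟨u, x⟩ ⟨w, y⟩
  rw [Matrix.mul_apply, Fintype.sum_prod_type]
  have step1 : ∀ v : Fin n → Fin n,
      (∑ z : Fin N → Fin n,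
        emb j (Kaux n N K) (u, x) (v, z) * emb j' (Raux n N η μ b) (v, z) (w, y))
      = (if ((∀ c, c ≠ j → u c = v c) ∧ (∀ c, c ≠ j' → v c = w c)) then (1:ℂ) else 0) *
        ∑ z : Fin N → Fin n,
          (if x = z then (1:ℂ) else 0) *
            ((if ∀ c, c ≠ b → z c = y c then (1:ℂ) else 0) *
              (K (u j) (v j) * Rmat n η μ (v j', z b) (w j', y b))) := by
    intro v
    rw [Finset.mul_sum]
    apply Finset.sum_congr rfl
    intro z _
    simp only [embK_apply, embR_apply]
    rw [← boole_and]
    ring_nf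
  rw [Finset.sum_congr rfl (fun v _ => step1 v)]
  have step2 : ∀ v : Fin n → Fin n,
      (∑ z : Fin N → Fin n,
          (if x = z then (1:ℂ) else 0) *
            ((if ∀ c, c ≠ b → z c = y c then (1:ℂ) else 0) *
              (K (u j) (v j) * Rmat n η μ (v j', z b) (w j', y b))))
      = (if ∀ c, c ≠ b → x c = y c then (1:ℂ) else 0)
          * (K (u j) (v j) * Rmat n η μ (v j', x b) (w j', y b)) := by
    intro v
    rw [sum_collapse_point (fun z => x = z) True x (fun z => by
        constructor
        · rintro rfl; exact ⟨trivial, rfl⟩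
        · rintro ⟨-, rfl⟩; rfl)
      (fun z => (if ∀ c, c ≠ b → z c = y c then (1:ℂ) else 0) *
        (K (u j) (v j) * Rmat n η μ (v j', z b) (w j', y b)))]
    rw [if_pos trivial, one_mul]
  rw [Finset.sum_congr rfl (fun v _ => by rw [step2 v])]
  rw [sum_collapse_point _ (∀ c, c ≠ j → c ≠ j' → u c = w c) (Function.update u j (w j))
    (fun v => two_constraints_iff hj u w v)
    (fun v => (if ∀ c, c ≠ b → x c = y c then (1:ℂ) else 0)
      * (K (u j) (v j) * Rmat n η μ (v j', x b) (w j', y b)))]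
  rw [Function.update_self, Function.update_of_ne (Ne.symm hj)]
  simp only [Matrix.of_apply]
  ring

lemma embR_mul_embK (K : Matrix (Fin n) (Fin n) ℂ) {j j' : Fin n} (hj : j ≠ j')
    (b : Fin N) (η μ : ℂ) :
    emb j' (Raux n N η μ b) * emb j (Kaux n N K)
      = Matrix.of fun p q =>
          K (p.1 j) (q.1 j) * Rmat n η μ (p.1 j', p.2 b) (q.1 j', q.2 b)
          * (if ∀ c, c ≠ j → c ≠ j' → p.1 c = q.1 c then (1:ℂ) else 0)
          * (if ∀ c, c ≠ b → p.2 c = q.2 c then (1:ℂ) else 0) := by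
  ext ⟨u, x⟩ ⟨w, y⟩
  rw [Matrix.mul_apply, Fintype.sum_prod_type]
  have step1 : ∀ v : Fin n → Fin n,
      (∑ z : Fin N → Fin n,
        emb j' (Raux n N η μ b) (u, x) (v, z) * emb j (Kaux n N K) (v, z) (w, y))
      = (if ((∀ c, c ≠ j' → u c = v c) ∧ (∀ c, c ≠ j → v c = w c)) then (1:ℂ) else 0) *
        ∑ z : Fin N → Fin n,
          (if ((∀ c, c ≠ b → x c = z c) ∧ z = y) then (1:ℂ) else 0) *
            (K (v j) (w j) * Rmat n η μ (u j', x b) (v j', z b)) := by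
    intro v
    rw [Finset.mul_sum]
    apply Finset.sum_congr rfl
    intro z _
    simp only [embK_apply, embR_apply]
    rw [← boole_and, ← boole_and]
    ring_nf
  rw [Finset.sum_congr rfl (fun v _ => step1 v)]
  have step2 : ∀ v : Fin n → Fin n,
      (∑ z : Fin N → Fin n,
          (if ((∀ c, c ≠ b → x c = z c) ∧ z = y) then (1:ℂ) else 0) *
            (K (v j) (w j) * Rmat n η μ (u j', x b) (v j', z b)))
      = (if ∀ c, c ≠ b → x c = y c then (1:ℂ) else 0)
          * (K (v j) (w j) * Rmat n η μ (u j', x b) (v j', y b)) := by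
    intro v
    rw [sum_collapse_point _ (∀ c, c ≠ b → x c = y c) y (fun z => by
        constructor
        · rintro ⟨h1, rfl⟩; exact ⟨h1, rfl⟩
        · rintro ⟨h1, rfl⟩; exact ⟨h1, rfl⟩)
      (fun z => K (v j) (w j) * Rmat n η μ (u j', x b) (v j', z b))]
  rw [Finset.sum_congr rfl (fun v _ => by rw [step2 v])]
  rw [sum_collapse_point _ (∀ c, c ≠ j' → c ≠ j → u c = w c) (Function.update u j' (w j'))
    (fun v => two_constraints_iff (Ne.symm hj) u w v)
    (fun v => (if ∀ c, c ≠ b → x c = y c then (1:ℂ) else 0)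
      * (K (v j) (w j) * Rmat n η μ (u j', x b) (v j', y b)))]
  rw [Function.update_self, Function.update_of_ne hj]
  simp only [Matrix.of_apply]
  rw [boole_eq (show (∀ c, c ≠ j' → c ≠ j → u c = w c) ↔ (∀ c, c ≠ j → c ≠ j' → u c = w c) by
    constructor <;> (intro h c h1 h2; exact h c h2 h1))]
  ring

lemma commute_K_R (K : Matrix (Fin n) (Fin n) ℂ) {j j' : Fin n} (hj : j ≠ j')
    (b : Fin N) (η μ : ℂ) :
    Commute (emb j (Kaux n N K)) (emb j' (Raux n N η μ b)) := by
  unfold Commute SemiconjBy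
  rw [embK_mul_embR K hj b η μ, embR_mul_embK K hj b η μ]

lemma commute_R_R {j j' : Fin n} (hj : j ≠ j') {b b' : Fin N} (hb : b ≠ b') (η μ μ' : ℂ) :
    Commute (emb j (Raux n N η μ b)) (emb j' (Raux n N η μ' b')) := by
  unfold Commute SemiconjBy
  rw [embR_mul_embR hj hb η μ μ', embR_mul_embR (Ne.symm hj) (Ne.symm hb) η μ' μ]
  ext ⟨u, x⟩ ⟨w, y⟩
  simp only [Matrix.of_apply]
  rw [boole_eq (show (∀ c, c ≠ j → c ≠ j' → u c = w c) ↔ (∀ c, c ≠ j' → c ≠ j → u c = w c) by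
    constructor <;> (intro h c h1 h2; exact h c h2 h1)),
    boole_eq (show (∀ c, c ≠ b → c ≠ b' → x c = y c) ↔ (∀ c, c ≠ b' → c ≠ b → x c = y c) by
    constructor <;> (intro h c h1 h2; exact h c h2 h1))]
  ring

end ClosedForms

section KbigSection

variable {n N : ℕ}

lemma Kbig_take (K : Matrix (Fin n) (Fin n) ℂ) :
    ∀ (k : ℕ), k ≤ n →
    ((List.ofFn fun j : Fin n => emb (N := N) j (Kaux n N K)).take k).prod
      = Matrix.of fun p q =>
          (∏ j ∈ Finset.univ.filter (fun j : Fin n => (j : ℕ) < k), K (p.1 j) (q.1 j))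
          * (if ∀ j : Fin n, ¬((j : ℕ) < k) → p.1 j = q.1 j then (1:ℂ) else 0)
          * (if p.2 = q.2 then (1:ℂ) else 0) := by
  intro k
  induction k with
  | zero =>
    intro _
    ext ⟨u, x⟩ ⟨w, y⟩
    simp only [List.take_zero, List.prod_nil, Matrix.one_apply, Matrix.of_apply,
      Prod.mk.injEq]
    have h1 : Finset.univ.filter (fun j : Fin n => (j:ℕ) < 0) = ∅ := by
      apply Finset.filter_false_of_mem
      intro j _
      omega
    rw [h1, Finset.prod_empty, one_mul, boole_and]
    apply boole_eq
    constructor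
    · rintro ⟨h1', h2⟩
      exact ⟨fun j _ => congrFun h1' j, h2⟩
    · rintro ⟨h1', h2⟩
      exact ⟨funext fun j => h1' j (by omega), h2⟩
  | succ k ih =>
    intro hk1
    have hk : k < n := hk1
    have hkn : k ≤ n := le_of_lt hk
    rw [List.prod_take_succ _ k (by simpa using hk), ih hkn]
    have hget : (List.ofFn fun j : Fin n => emb (N := N) j (Kaux n N K))[k]'(by simpa using hk)
        = emb (⟨k, hk⟩ : Fin n) (Kaux n N K) := by
      simp [List.getElem_ofFn]
    rw [hget]
    ext ⟨u, x⟩ ⟨w, y⟩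
    rw [Matrix.mul_apply, Fintype.sum_prod_type]
    have step1 : ∀ v : Fin n → Fin n,
        (∑ z : Fin N → Fin n,
          (Matrix.of fun p q =>
            (∏ j ∈ Finset.univ.filter (fun j : Fin n => (j : ℕ) < k), K (p.1 j) (q.1 j))
            * (if ∀ j : Fin n, ¬((j : ℕ) < k) → p.1 j = q.1 j then (1:ℂ) else 0)
            * (if p.2 = q.2 then (1:ℂ) else 0)) (u, x) (v, z)
          * emb (⟨k, hk⟩ : Fin n) (Kaux n N K) (v, z) (w, y))
        = (if ((∀ j : Fin n, ¬((j : ℕ) < k) → u j = v j)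
              ∧ (∀ c, c ≠ (⟨k, hk⟩ : Fin n) → v c = w c)) then (1:ℂ) else 0) *
          ∑ z : Fin N → Fin n,
            (if (x = z ∧ z = y) then (1:ℂ) else 0) *
              ((∏ j ∈ Finset.univ.filter (fun j : Fin n => (j : ℕ) < k), K (u j) (v j))
                * K (v ⟨k, hk⟩) (w ⟨k, hk⟩)) := by
      intro v
      rw [Finset.mul_sum]
      apply Finset.sum_congr rfl
      intro z _
      simp only [Matrix.of_apply, embK_apply]
      rw [← boole_and, ← boole_and]
      ring_nf
    rw [Finset.sum_congr rfl (fun v _ => step1 v)]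
    have step2 : ∀ v : Fin n → Fin n,
        (∑ z : Fin N → Fin n,
          (if (x = z ∧ z = y) then (1:ℂ) else 0) *
            ((∏ j ∈ Finset.univ.filter (fun j : Fin n => (j : ℕ) < k), K (u j) (v j))
              * K (v ⟨k, hk⟩) (w ⟨k, hk⟩)))
        = (if x = y then (1:ℂ) else 0) *
            ((∏ j ∈ Finset.univ.filter (fun j : Fin n => (j : ℕ) < k), K (u j) (v j))
              * K (v ⟨k, hk⟩) (w ⟨k, hk⟩)) := by
      intro v
      rw [sum_collapse_point (fun z => x = z ∧ z = y) (x = y) y (fun z => by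
        constructor
        · rintro ⟨rfl, rfl⟩; exact ⟨rfl, rfl⟩
        · rintro ⟨rfl, rfl⟩; exact ⟨rfl, rfl⟩)
        (fun z => (∏ j ∈ Finset.univ.filter (fun j : Fin n => (j : ℕ) < k), K (u j) (v j))
          * K (v ⟨k, hk⟩) (w ⟨k, hk⟩))]
    rw [Finset.sum_congr rfl (fun v _ => by rw [step2 v])]
    have hiff : ∀ v : Fin n → Fin n,
        ((∀ j : Fin n, ¬((j : ℕ) < k) → u j = v j)
          ∧ (∀ c, c ≠ (⟨k, hk⟩ : Fin n) → v c = w c))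
        ↔ ((∀ j : Fin n, ¬((j : ℕ) < k + 1) → u j = w j)
            ∧ v = Function.update w ⟨k, hk⟩ (u ⟨k, hk⟩)) := by
      intro v
      constructor
      · rintro ⟨h1, h2⟩
        constructor
        · intro j hj
          have hjk : j ≠ (⟨k, hk⟩ : Fin n) := by
            intro hh
            have hv : (j : ℕ) = k := by rw [hh]
            omega
          exact (h1 j (by omega)).trans (h2 j hjk)
        · funext c
          by_cases hc : c = (⟨k, hk⟩ : Fin n)
          · rw [hc, Function.update_self]
            exact (h1 ⟨k, hk⟩ (by simp)).symm
          · rw [Function.update_of_ne hc]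
            exact h2 c hc
      · rintro ⟨hC, rfl⟩
        constructor
        · intro j hj
          by_cases hc : j = (⟨k, hk⟩ : Fin n)
          · rw [hc, Function.update_self]
          · rw [Function.update_of_ne hc]
            apply hC
            have : (j : ℕ) ≠ k := fun hh => hc (Fin.ext hh)
            omega
        · intro c hc
          rw [Function.update_of_ne hc]
    rw [sum_collapse_point _ (∀ j : Fin n, ¬((j : ℕ) < k + 1) → u j = w j)
      (Function.update w ⟨k, hk⟩ (u ⟨k, hk⟩)) hiff
      (fun v => (if x = y then (1:ℂ) else 0) *
        ((∏ j ∈ Finset.univ.filter (fun j : Fin n => (j : ℕ) < k), K (u j) (v j))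
          * K (v ⟨k, hk⟩) (w ⟨k, hk⟩)))]
    have hprod : (∏ j ∈ Finset.univ.filter (fun j : Fin n => (j : ℕ) < k),
        K (u j) (Function.update w ⟨k, hk⟩ (u ⟨k, hk⟩) j)) =
        ∏ j ∈ Finset.univ.filter (fun j : Fin n => (j : ℕ) < k), K (u j) (w j) := by
      apply Finset.prod_congr rfl
      intro j hj
      rw [Finset.mem_filter] at hj
      have : j ≠ (⟨k, hk⟩ : Fin n) := by
        intro hh
        have hv : (j : ℕ) = k := by rw [hh]
        omega
      rw [Function.update_of_ne this]
    rw [hprod, Function.update_self]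
    have hsplit : Finset.univ.filter (fun j : Fin n => (j : ℕ) < k + 1)
        = insert (⟨k, hk⟩ : Fin n) (Finset.univ.filter (fun j : Fin n => (j : ℕ) < k)) := by
      ext j
      simp only [Finset.mem_filter, Finset.mem_insert, Finset.mem_univ, true_and]
      constructor
      · intro hj
        by_cases hc : (j : ℕ) = k
        · exact Or.inl (Fin.ext hc)
        · exact Or.inr (by omega)
      · rintro (rfl | hj)
        · simp
        · omega
    simp only [Matrix.of_apply]
    rw [hsplit, Finset.prod_insert (by simp)]
    ring

lemma Kbig_prod (K : Matrix (Fin n) (Fin n) ℂ) :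
    (List.ofFn fun j : Fin n => emb (N := N) j (Kaux n N K)).prod
      = Matrix.of fun p q =>
          (∏ j, K (p.1 j) (q.1 j)) * (if p.2 = q.2 then (1:ℂ) else 0) := by
  have := Kbig_take (N := N) K n le_rfl
  have h0 : (List.ofFn fun j : Fin n => emb (N := N) j (Kaux n N K)).take n
      = List.ofFn fun j : Fin n => emb (N := N) j (Kaux n N K) := by
    apply List.take_of_length_le
    simp
  rw [h0] at this
  rw [this]
  ext ⟨u, x⟩ ⟨w, y⟩
  simp only [Matrix.of_apply]
  have h1 : Finset.univ.filter (fun j : Fin n => (j : ℕ) < n) = Finset.univ := by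
    apply Finset.filter_true_of_mem
    intro j _
    exact j.isLt
  have h2 : (if ∀ j : Fin n, ¬((j : ℕ) < n) → u j = w j then (1:ℂ) else 0) = 1 := by
    rw [if_pos]
    intro j hj
    exact absurd j.isLt hj
  rw [h1, h2, mul_one]

end KbigSection
/-! ### The right-covector eigen relation -/

section IsQSection

variable {n N : ℕ}

/-- `X` kills the antisymmetric covector from the right with eigenvalue `c`. -/
def IsQ (X : Matrix ((Fin n → Fin n) × (Fin N → Fin n)) ((Fin n → Fin n) × (Fin N → Fin n)) ℂ)
    (c : ℂ) : Prop :=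
  ∀ (u : Fin n → Fin n) (x y : Fin N → Fin n),
    ∑ w : Fin n → Fin n, epsv w * X (u, x) (w, y)
      = c * epsv u * (if x = y then 1 else 0)

lemma IsQ_one : IsQ (1 : Matrix ((Fin n → Fin n) × (Fin N → Fin n))
    ((Fin n → Fin n) × (Fin N → Fin n)) ℂ) 1 := by
  intro u x y
  have step : ∀ w : Fin n → Fin n, epsv w *
      (1 : Matrix ((Fin n → Fin n) × (Fin N → Fin n))
        ((Fin n → Fin n) × (Fin N → Fin n)) ℂ) (u, x) (w, y)
      = (if w = u then (1:ℂ) else 0) * (epsv w * (if x = y then 1 else 0)) := by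
    intro w
    rw [Matrix.one_apply]
    by_cases h1 : w = u
    · subst h1
      by_cases h2 : x = y
      · simp [h2]
      · have : (w, x) ≠ (w, y) := by
          intro hh
          exact h2 (congrArg Prod.snd hh)
        simp [this, h2]
    · have : (u, x) ≠ (w, y) := by
        intro hh
        exact h1 (congrArg Prod.fst hh).symm
      simp [this, h1]
  rw [Finset.sum_congr rfl (fun w _ => step w)]
  simp only [boole_mul]
  rw [Finset.sum_ite_eq' Finset.univ u (fun w => epsv w * (if x = y then 1 else 0))]
  simp only [Finset.mem_univ, if_true]
  ring

lemma IsQ_mul {X Y : Matrix ((Fin n → Fin n) × (Fin N → Fin n))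
    ((Fin n → Fin n) × (Fin N → Fin n)) ℂ} {c d : ℂ}
    (hX : IsQ X c) (hY : IsQ Y d) : IsQ (X * Y) (c * d) := by
  intro u x y
  have expand : ∀ w : Fin n → Fin n,
      epsv w * (X * Y) (u, x) (w, y)
        = ∑ p : (Fin n → Fin n) × (Fin N → Fin n), X (u, x) p * (epsv w * Y p (w, y)) := by
    intro w
    rw [Matrix.mul_apply, Finset.mul_sum]
    apply Finset.sum_congr rfl
    intro p _
    ring
  rw [Finset.sum_congr rfl (fun w _ => expand w)]
  rw [Finset.sum_comm]
  have inner : ∀ p : (Fin n → Fin n) × (Fin N → Fin n),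
      (∑ w : Fin n → Fin n, X (u, x) p * (epsv w * Y p (w, y)))
        = X (u, x) p * (d * epsv p.1 * (if p.2 = y then 1 else 0)) := by
    intro p
    rw [← Finset.mul_sum]
    congr 1
    exact hY p.1 p.2 y
  rw [Finset.sum_congr rfl (fun p _ => inner p)]
  rw [Fintype.sum_prod_type]
  have inner2 : ∀ v : Fin n → Fin n,
      (∑ z : Fin N → Fin n, X (u, x) (v, z) * (d * epsv v * (if z = y then 1 else 0)))
        = d * (epsv v * X (u, x) (v, y)) := by
    intro v
    have reshape : ∀ z : Fin N → Fin n,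
        X (u, x) (v, z) * (d * epsv v * (if z = y then 1 else 0))
          = if z = y then d * (epsv v * X (u, x) (v, z)) else 0 := by
      intro z
      by_cases h : z = y
      · rw [h]; simp; ring
      · simp [h]
    rw [Finset.sum_congr rfl (fun z _ => reshape z)]
    rw [Finset.sum_ite_eq' Finset.univ y (fun z => d * (epsv v * X (u, x) (v, z)))]
    simp
  rw [Finset.sum_congr rfl (fun v _ => inner2 v)]
  rw [← Finset.mul_sum, hX u x y]
  ring

lemma IsQ_ofFn_prod {m : ℕ} (g : Fin m → Matrix ((Fin n → Fin n) × (Fin N → Fin n))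
    ((Fin n → Fin n) × (Fin N → Fin n)) ℂ) (cs : Fin m → ℂ)
    (h : ∀ b, IsQ (g b) (cs b)) : IsQ (List.ofFn g).prod (∏ b, cs b) := by
  induction m with
  | zero => simpa using IsQ_one
  | succ m ih =>
    rw [List.ofFn_succ, List.prod_cons, Fin.prod_univ_succ]
    exact IsQ_mul (h 0) (ih (fun b => g b.succ) (fun b => cs b.succ) (fun b => h b.succ))

lemma IsQ_Kbig (K : Matrix (Fin n) (Fin n) ℂ) :
    IsQ ((List.ofFn fun j : Fin n => emb (N := N) j (Kaux n N K)).prod) K.det := by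
  rw [Kbig_prod]
  intro u x y
  simp only [Matrix.of_apply]
  have reshape : ∀ w : Fin n → Fin n,
      epsv w * ((∏ j, K (u j) (w j)) * (if x = y then (1:ℂ) else 0))
        = (epsv w * ∏ j, K (u j) (w j)) * (if x = y then (1:ℂ) else 0) := by
    intro w
    ring
  rw [Finset.sum_congr rfl (fun w _ => reshape w), ← Finset.sum_mul, epsv_mul_K_sum]

end IsQSection

section SiteLemma

variable {n N : ℕ}

lemma epsv_comp_swap {i k : Fin n} (h : i ≠ k) (v : Fin n → Fin n) :
    epsv (v ∘ ⇑(Equiv.swap i k)) = - epsv v := by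
  unfold epsv
  rw [← Equiv.sum_comp (Equiv.mulRight (Equiv.swap i k))
    (fun σ => ((Equiv.Perm.sign σ : ℤ) : ℂ) * (if v ∘ ⇑(Equiv.swap i k) = ⇑σ then 1 else 0))]
  rw [← Finset.sum_neg_distrib]
  apply Finset.sum_congr rfl
  intro σ _
  have hsign : ((Equiv.Perm.sign (σ * Equiv.swap i k) : ℤ) : ℂ)
      = - ((Equiv.Perm.sign σ : ℤ) : ℂ) := by
    rw [Equiv.Perm.sign_mul, Equiv.Perm.sign_swap h]
    push_cast
    ring
  have hcond : (v ∘ ⇑(Equiv.swap i k) = ⇑(σ * Equiv.swap i k)) ↔ (v = ⇑σ) := by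
    constructor
    · intro hh
      funext c
      have := congrFun hh ((Equiv.swap i k) c)
      simpa [Equiv.Perm.mul_apply, Equiv.swap_apply_self] using this
    · intro hh
      funext c
      simp [Equiv.Perm.mul_apply, hh]
  simp only [Equiv.coe_mulRight]
  rw [hsign]
  simp only [hcond]
  ring

lemma update_update_eq_comp_swap {i k : Fin n} (hik : i ≠ k) (u : Fin n → Fin n) (s : Fin n) :
    Function.update (Function.update u k s) i (u k)
      = (Function.update u i s) ∘ ⇑(Equiv.swap i k) := by
  funext c
  simp only [Function.comp_apply]
  rcases eq_or_ne c i with rfl | hci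
  · rw [Function.update_self, Equiv.swap_apply_left, Function.update_of_ne (Ne.symm hik)]
  · rcases eq_or_ne c k with rfl | hck
    · rw [Function.update_of_ne hci, Function.update_self, Equiv.swap_apply_right,
        Function.update_self]
    · rw [Function.update_of_ne hci, Function.update_of_ne hck,
        Equiv.swap_apply_of_ne_of_ne hci hck, Function.update_of_ne hci]

lemma site_induction (η lam : ℂ) (ξ : Fin N → ℂ) (b : Fin N) :
    ∀ (d k : ℕ), k + d = n → ∀ (u : Fin n → Fin n) (x y : Fin N → Fin n),
    ∑ w : Fin n → Fin n, epsv w *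
      (((List.ofFn fun j : Fin n =>
          emb j (Raux n N η (lam - (j : ℕ) * η - ξ b) b)).drop k).prod) (u, x) (w, y)
    = (∏ r ∈ Finset.Ico k n, (lam - (r : ℕ) * η - ξ b)) * epsv u * (if x = y then 1 else 0)
      + η * (∏ r ∈ Finset.Ico (k+1) n, (lam - (r : ℕ) * η - ξ b)) *
        (∑ i ∈ Finset.univ.filter (fun i : Fin n => k ≤ (i : ℕ)),
          (if u i = y b then (1:ℂ) else 0) * epsv (Function.update u i (x b)))
        * (if ∀ c, c ≠ b → x c = y c then 1 else 0) := by
  intro d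
  induction d with
  | zero =>
    intro k hk u x y
    have hdrop : (List.ofFn fun j : Fin n =>
        emb j (Raux n N η (lam - (j : ℕ) * η - ξ b) b)).drop k = [] := by
      apply List.drop_eq_nil_of_le
      simp only [List.length_ofFn]
      omega
    rw [hdrop, List.prod_nil]
    have h1 := IsQ_one (n := n) (N := N) u x y
    rw [h1]
    have h2 : Finset.univ.filter (fun i : Fin n => k ≤ (i : ℕ)) = ∅ := by
      apply Finset.filter_false_of_mem
      intro i _
      have := i.isLt
      omega
    have h3 : Finset.Ico k n = ∅ := Finset.Ico_eq_empty (by omega)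
    rw [h2, Finset.sum_empty, h3, Finset.prod_empty]
    ring
  | succ d ih =>
    intro k hk u x y
    have hkn : k < n := by omega
    have hlen : k < (List.ofFn fun j : Fin n =>
        emb j (Raux n N η (lam - (j : ℕ) * η - ξ b) b)).length := by simpa using hkn
    rw [List.drop_eq_getElem_cons hlen, List.prod_cons]
    have hget : (List.ofFn fun j : Fin n =>
        emb j (Raux n N η (lam - (j : ℕ) * η - ξ b) b))[k]'hlen
        = emb (⟨k, hkn⟩ : Fin n) (Raux n N η (lam - (k : ℕ) * η - ξ b) b) := by
      simp [List.getElem_ofFn]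
    rw [hget]
    -- abbreviations
    set A := emb (⟨k, hkn⟩ : Fin n) (Raux n N η (lam - (k : ℕ) * η - ξ b) b) with hA
    set Z := ((List.ofFn fun j : Fin n =>
        emb j (Raux n N η (lam - (j : ℕ) * η - ξ b) b)).drop (k+1)).prod with hZ
    set G : (Fin n → Fin n) → (Fin N → Fin n) → ℂ :=
      fun v z => ∑ w : Fin n → Fin n, epsv w * Z (v, z) (w, y) with hG
    have expand : ∑ w : Fin n → Fin n, epsv w * (A * Z) (u, x) (w, y)
        = ∑ v : Fin n → Fin n, ∑ z : Fin N → Fin n, A (u, x) (v, z) * G v z := by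
      have e1 : ∀ w : Fin n → Fin n, epsv w * (A * Z) (u, x) (w, y)
          = ∑ p : (Fin n → Fin n) × (Fin N → Fin n),
              A (u, x) p * (epsv w * Z p (w, y)) := by
        intro w
        rw [Matrix.mul_apply, Finset.mul_sum]
        apply Finset.sum_congr rfl
        intro p _
        ring
      calc ∑ w : Fin n → Fin n, epsv w * (A * Z) (u, x) (w, y)
          = ∑ w : Fin n → Fin n, ∑ p : (Fin n → Fin n) × (Fin N → Fin n),
              A (u, x) p * (epsv w * Z p (w, y)) :=
            Finset.sum_congr rfl (fun w _ => e1 w)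
        _ = ∑ p : (Fin n → Fin n) × (Fin N → Fin n), ∑ w : Fin n → Fin n,
              A (u, x) p * (epsv w * Z p (w, y)) := Finset.sum_comm
        _ = ∑ p : (Fin n → Fin n) × (Fin N → Fin n), A (u, x) p * G p.1 p.2 :=
            Finset.sum_congr rfl (fun p _ => by rw [← Finset.mul_sum])
        _ = ∑ v : Fin n → Fin n, ∑ z : Fin N → Fin n, A (u, x) (v, z) * G v z :=
            Fintype.sum_prod_type _
    rw [expand]
    -- collapse the auxiliary coordinate
    have reshape1 : ∀ v : Fin n → Fin n,
        (∑ z : Fin N → Fin n, A (u, x) (v, z) * G v z)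
        = (if ∀ c, c ≠ (⟨k, hkn⟩ : Fin n) → u c = v c then (1:ℂ) else 0) *
            ∑ z : Fin N → Fin n, (if ∀ c, c ≠ b → x c = z c then (1:ℂ) else 0) *
              (Rmat n η (lam - (k : ℕ) * η - ξ b) (u ⟨k, hkn⟩, x b) (v ⟨k, hkn⟩, z b) * G v z) := by
      intro v
      rw [Finset.mul_sum]
      apply Finset.sum_congr rfl
      intro z _
      rw [hA, embR_apply]
      ring
    rw [Finset.sum_congr rfl (fun v _ => reshape1 v)]
    rw [sum_collapse_free (⟨k, hkn⟩ : Fin n) u _ True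
      (fun v => by simp only [true_and])
      (fun v => ∑ z : Fin N → Fin n, (if ∀ c, c ≠ b → x c = z c then (1:ℂ) else 0) *
        (Rmat n η (lam - (k : ℕ) * η - ξ b) (u ⟨k, hkn⟩, x b) (v ⟨k, hkn⟩, z b) * G v z))]
    rw [if_pos trivial, one_mul]
    have collapse2 : ∀ a : Fin n,
        (∑ z : Fin N → Fin n, (if ∀ c, c ≠ b → x c = z c then (1:ℂ) else 0) *
          (Rmat n η (lam - (k : ℕ) * η - ξ b)
            (u ⟨k, hkn⟩, x b) ((Function.update u ⟨k, hkn⟩ a) ⟨k, hkn⟩, z b)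
            * G (Function.update u ⟨k, hkn⟩ a) z))
        = ∑ c : Fin n, Rmat n η (lam - (k : ℕ) * η - ξ b) (u ⟨k, hkn⟩, x b) (a, c)
            * G (Function.update u ⟨k, hkn⟩ a) (Function.update x b c) := by
      intro a
      rw [sum_collapse_free b x _ True (fun z => by simp only [true_and])
        (fun z => Rmat n η (lam - (k : ℕ) * η - ξ b)
          (u ⟨k, hkn⟩, x b) ((Function.update u ⟨k, hkn⟩ a) ⟨k, hkn⟩, z b)
          * G (Function.update u ⟨k, hkn⟩ a) z)]
      rw [if_pos trivial, one_mul]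
      apply Finset.sum_congr rfl
      intro c _
      rw [Function.update_self, Function.update_self]
    rw [Finset.sum_congr rfl (fun a _ => collapse2 a)]
    -- expand the R-matrix entry
    have hRmat : ∀ (a c : Fin n),
        Rmat n η (lam - (k : ℕ) * η - ξ b) (u ⟨k, hkn⟩, x b) (a, c)
          * G (Function.update u ⟨k, hkn⟩ a) (Function.update x b c)
        = (lam - (k : ℕ) * η - ξ b) *
            ((if u ⟨k, hkn⟩ = a then (1:ℂ) else 0) * ((if x b = c then (1:ℂ) else 0) *
              G (Function.update u ⟨k, hkn⟩ a) (Function.update x b c)))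
          + η * ((if x b = a then (1:ℂ) else 0) * ((if u ⟨k, hkn⟩ = c then (1:ℂ) else 0) *
              G (Function.update u ⟨k, hkn⟩ a) (Function.update x b c))) := by
      intro a c
      rw [Rmat_apply]
      have h1 : ((u ⟨k, hkn⟩, x b) = (a, c)) ↔ (u ⟨k, hkn⟩ = a ∧ x b = c) := by
        rw [Prod.mk.injEq]
      have h2 : ((u ⟨k, hkn⟩, x b).1 = (a, c).2 ∧ (u ⟨k, hkn⟩, x b).2 = (a, c).1)
          ↔ (u ⟨k, hkn⟩ = c ∧ x b = a) := Iff.rfl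
      rw [boole_eq h1, boole_eq h2, ← boole_and, ← boole_and]
      ring
    rw [Finset.sum_congr rfl (fun a _ => Finset.sum_congr rfl (fun c _ => hRmat a c))]
    simp only [Finset.sum_add_distrib, ← Finset.mul_sum]
    -- collapse the Kronecker deltas
    have hcollapse : ∀ (s t : Fin n) (F : Fin n → Fin n → ℂ),
        (∑ a : Fin n, (if s = a then (1:ℂ) else 0) *
          ∑ c : Fin n, (if t = c then (1:ℂ) else 0) * F a c) = F s t := by
      intro s t F
      have inner : ∀ a : Fin n, (∑ c : Fin n, (if t = c then (1:ℂ) else 0) * F a c)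
          = F a t := by
        intro a
        simp only [boole_mul]
        rw [Finset.sum_ite_eq Finset.univ t (F a)]
        simp
      rw [Finset.sum_congr rfl (fun a _ => by rw [inner a])]
      simp only [boole_mul]
      rw [Finset.sum_ite_eq Finset.univ s (fun a => F a t)]
      simp
    rw [hcollapse (u ⟨k, hkn⟩) (x b)
      (fun a c => G (Function.update u ⟨k, hkn⟩ a) (Function.update x b c))]
    rw [hcollapse (x b) (u ⟨k, hkn⟩)
      (fun a c => G (Function.update u ⟨k, hkn⟩ a) (Function.update x b c))]
    rw [Function.update_eq_self, Function.update_eq_self]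
    -- now apply the induction hypothesis to the two G-values
    have hG1 : G u x
        = (∏ r ∈ Finset.Ico (k+1) n, (lam - (r : ℕ) * η - ξ b)) * epsv u *
            (if x = y then 1 else 0)
          + η * (∏ r ∈ Finset.Ico (k+2) n, (lam - (r : ℕ) * η - ξ b)) *
            (∑ i ∈ Finset.univ.filter (fun i : Fin n => k+1 ≤ (i : ℕ)),
              (if u i = y b then (1:ℂ) else 0) * epsv (Function.update u i (x b)))
            * (if ∀ c, c ≠ b → x c = y c then 1 else 0) := ih (k+1) (by omega) u x y
    have hG2 : G (Function.update u ⟨k, hkn⟩ (x b)) (Function.update x b (u ⟨k, hkn⟩))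
        = (∏ r ∈ Finset.Ico (k+1) n, (lam - (r : ℕ) * η - ξ b)) *
            epsv (Function.update u ⟨k, hkn⟩ (x b)) *
            (if Function.update x b (u ⟨k, hkn⟩) = y then 1 else 0)
          + η * (∏ r ∈ Finset.Ico (k+2) n, (lam - (r : ℕ) * η - ξ b)) *
            (∑ i ∈ Finset.univ.filter (fun i : Fin n => k+1 ≤ (i : ℕ)),
              (if (Function.update u ⟨k, hkn⟩ (x b)) i = y b then (1:ℂ) else 0) *
                epsv (Function.update (Function.update u ⟨k, hkn⟩ (x b)) i
                  ((Function.update x b (u ⟨k, hkn⟩)) b)))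
            * (if ∀ c, c ≠ b → (Function.update x b (u ⟨k, hkn⟩)) c = y c then 1 else 0) :=
      ih (k+1) (by omega) _ _ y
    rw [hG1, hG2]
    -- simplify the primed pieces
    have f2 : (if Function.update x b (u ⟨k, hkn⟩) = y then (1:ℂ) else 0)
        = (if u ⟨k, hkn⟩ = y b then (1:ℂ) else 0) *
            (if ∀ c, c ≠ b → x c = y c then (1:ℂ) else 0) := by
      rw [boole_and]
      exact boole_eq Function.update_eq_iff
    have f3 : (if ∀ c, c ≠ b → (Function.update x b (u ⟨k, hkn⟩)) c = y c then (1:ℂ) else 0)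
        = (if ∀ c, c ≠ b → x c = y c then (1:ℂ) else 0) := by
      apply boole_eq
      constructor
      · intro h c hc
        have := h c hc
        rwa [Function.update_of_ne hc] at this
      · intro h c hc
        rw [Function.update_of_ne hc]
        exact h c hc
    have f1 : (∑ i ∈ Finset.univ.filter (fun i : Fin n => k+1 ≤ (i : ℕ)),
          (if (Function.update u ⟨k, hkn⟩ (x b)) i = y b then (1:ℂ) else 0) *
            epsv (Function.update (Function.update u ⟨k, hkn⟩ (x b)) i
              ((Function.update x b (u ⟨k, hkn⟩)) b)))
        = - ∑ i ∈ Finset.univ.filter (fun i : Fin n => k+1 ≤ (i : ℕ)),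
            (if u i = y b then (1:ℂ) else 0) * epsv (Function.update u i (x b)) := by
      rw [← Finset.sum_neg_distrib]
      apply Finset.sum_congr rfl
      intro i hi
      rw [Finset.mem_filter] at hi
      have hik : i ≠ (⟨k, hkn⟩ : Fin n) := by
        intro hh
        have hv : (i : ℕ) = k := by rw [hh]
        omega
      rw [Function.update_of_ne hik, Function.update_self]
      rw [update_update_eq_comp_swap hik u (x b), epsv_comp_swap hik]
      ring
    rw [f1, f2, f3]
    -- split off the `i = k` term on the right-hand side
    have hsplit : Finset.univ.filter (fun i : Fin n => k ≤ (i : ℕ))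
        = insert (⟨k, hkn⟩ : Fin n) (Finset.univ.filter (fun i : Fin n => k+1 ≤ (i : ℕ))) := by
      ext i
      simp only [Finset.mem_filter, Finset.mem_insert, Finset.mem_univ, true_and]
      constructor
      · intro hi
        by_cases hc : (i : ℕ) = k
        · exact Or.inl (Fin.ext hc)
        · exact Or.inr (by omega)
      · rintro (rfl | hi)
        · simp
        · omega
    rw [hsplit, Finset.sum_insert (by
      simp only [Finset.mem_filter, Finset.mem_univ, true_and]
      omega)]
    -- split off the `r = k` factor on the right-hand side
    rw [Finset.prod_eq_prod_Ico_succ_bot hkn (fun r => lam - (r : ℕ) * η - ξ b)]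
    -- the key cancellation
    have hf6 : (lam - ((k+1 : ℕ) : ℂ) * η - ξ b) *
          (∏ r ∈ Finset.Ico (k+2) n, (lam - (r : ℕ) * η - ξ b)) *
          (∑ i ∈ Finset.univ.filter (fun i : Fin n => k+1 ≤ (i : ℕ)),
            (if u i = y b then (1:ℂ) else 0) * epsv (Function.update u i (x b)))
        = (∏ r ∈ Finset.Ico (k+1) n, (lam - (r : ℕ) * η - ξ b)) *
          (∑ i ∈ Finset.univ.filter (fun i : Fin n => k+1 ≤ (i : ℕ)),
            (if u i = y b then (1:ℂ) else 0) * epsv (Function.update u i (x b))) := by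
      by_cases hkk : k + 1 < n
      · rw [Finset.prod_eq_prod_Ico_succ_bot hkk (fun r => lam - (r : ℕ) * η - ξ b)]
      · have hempty : Finset.univ.filter (fun i : Fin n => k+1 ≤ (i : ℕ)) = ∅ := by
          apply Finset.filter_false_of_mem
          intro i _
          have := i.isLt
          omega
        rw [hempty, Finset.sum_empty]
        ring
    have hcast : ((k+1 : ℕ) : ℂ) = (k : ℂ) + 1 := by push_cast; ring
    rw [hcast] at hf6
    linear_combination η * (if ∀ c, c ≠ b → x c = y c then (1:ℂ) else 0) * hf6

end SiteLemma

section Assembly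

variable {n N : ℕ}

lemma IsQ_site (hn : 1 ≤ n) (η lam : ℂ) (ξ : Fin N → ℂ) (b : Fin N) :
    IsQ ((List.ofFn fun j : Fin n => emb j (Raux n N η (lam - (j : ℕ) * η - ξ b) b)).prod)
      ((lam - ξ b + η) * ∏ m ∈ Finset.Icc 1 (n-1), (lam - ξ b - (m : ℂ) * η)) := by
  intro u x y
  have h0 := site_induction η lam ξ b n 0 (by omega) u x y
  rw [List.drop_zero] at h0
  rw [h0]
  have hfil : Finset.univ.filter (fun i : Fin n => 0 ≤ (i : ℕ)) = Finset.univ :=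
    Finset.filter_true_of_mem (by simp)
  rw [hfil, epsv_update_sum u (x b) (y b)]
  have hb : (if x b = y b then (1:ℂ) else 0) * (if ∀ c, c ≠ b → x c = y c then (1:ℂ) else 0)
      = if x = y then (1:ℂ) else 0 := by
    rw [boole_and]
    apply boole_eq
    constructor
    · rintro ⟨h1, h2⟩
      funext c
      by_cases hc : c = b
      · rw [hc]; exact h1
      · exact h2 c hc
    · intro h
      exact ⟨congrFun h b, fun c _ => congrFun h c⟩
  have hP0 : (∏ r ∈ Finset.Ico 0 n, (lam - (r : ℕ) * η - ξ b))
      = (lam - ξ b) * ∏ r ∈ Finset.Ico 1 n, (lam - (r : ℕ) * η - ξ b) := by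
    rw [Finset.prod_eq_prod_Ico_succ_bot (by omega : 0 < n)
      (fun r => lam - (r : ℕ) * η - ξ b)]
    push_cast
    ring
  have hIcc : (∏ r ∈ Finset.Ico 1 n, (lam - (r : ℕ) * η - ξ b))
      = ∏ m ∈ Finset.Icc 1 (n-1), (lam - ξ b - (m : ℂ) * η) := by
    have he : Finset.Ico 1 n = Finset.Icc 1 (n-1) := by
      rw [← Finset.Ico_add_one_right_eq_Icc]
      congr 1
      omega
    rw [he]
    apply Finset.prod_congr rfl
    intro m _
    ring
  rw [hP0, hIcc]
  linear_combination (η * (∏ m ∈ Finset.Icc 1 (n-1), (lam - ξ b - (m : ℂ) * η)) * epsv u) * hb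

lemma bigProd_factor (η lam : ℂ) (ξ : Fin N → ℂ) (K : Matrix (Fin n) (Fin n) ℂ) :
    (List.ofFn fun j : Fin n => MauxJ n N η ξ K n j (lam - (j : ℕ) * η)).prod
      = (List.ofFn fun j : Fin n => emb j (Kaux n N K)).prod *
        (List.ofFn fun b : Fin N => (List.ofFn fun j : Fin n =>
          emb j (Raux n N η (lam - (j : ℕ) * η - ξ b.rev) b.rev)).prod).prod := by
  have h1 : (List.ofFn fun j : Fin n => MauxJ n N η ξ K n j (lam - (j : ℕ) * η))
      = List.ofFn fun j : Fin n => (emb j (Kaux n N K)) *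
          (List.ofFn fun b : Fin N =>
            emb j (Raux n N η (lam - (j : ℕ) * η - ξ b.rev) b.rev)).prod := by
    apply congrArg List.ofFn
    funext j
    exact MauxJ_factor η ξ K j (lam - (j : ℕ) * η)
  rw [h1]
  exact reorder_prod (fun j => emb j (Kaux n N K))
    (fun j b => emb j (Raux n N η (lam - (j : ℕ) * η - ξ b.rev) b.rev))
    (fun j j' b hjj' => commute_K_R K hjj' b.rev _ _)
    (fun j j' b b' hjj' hbb' =>
      commute_R_R hjj' (fun h => hbb' (Fin.rev_injective h)) _ _ _)

lemma sum_sign_comp (v w : Fin n → Fin n) :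
    (∑ π : Equiv.Perm (Fin n), ((Equiv.Perm.sign π : ℤ) : ℂ) * (if v = w ∘ ⇑π then 1 else 0))
      = epsv v * epsv w := by
  by_cases hw : Function.Bijective w
  · set τ := Equiv.ofBijective w hw with hτ
    have hwτ : w = ⇑τ := rfl
    have key := Fintype.sum_bijective (fun π : Equiv.Perm (Fin n) => τ * π)
      (Group.mulLeft_bijective τ)
      (fun π => ((Equiv.Perm.sign π : ℤ) : ℂ) * (if v = w ∘ ⇑π then 1 else 0))
      (fun σ => ((Equiv.Perm.sign τ : ℤ) : ℂ) *
        (((Equiv.Perm.sign σ : ℤ) : ℂ) * (if v = ⇑σ then 1 else 0)))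
      (fun π => by
        show ((Equiv.Perm.sign π : ℤ) : ℂ) * (if v = w ∘ ⇑π then 1 else 0)
            = ((Equiv.Perm.sign τ : ℤ) : ℂ) *
              (((Equiv.Perm.sign (τ * π) : ℤ) : ℂ) * (if v = ⇑(τ * π) then 1 else 0))
        have hsign : ((Equiv.Perm.sign (τ * π) : ℤ) : ℂ)
            = ((Equiv.Perm.sign τ : ℤ) : ℂ) * ((Equiv.Perm.sign π : ℤ) : ℂ) := by
          rw [Equiv.Perm.sign_mul]
          push_cast
          ring
        have hcond : (v = w ∘ ⇑π) ↔ (v = ⇑(τ * π)) := by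
          rw [hwτ]
          constructor
          · intro h; funext c; exact congrFun h c
          · intro h; funext c; exact congrFun h c
        have hsq : ((Equiv.Perm.sign τ : ℤ) : ℂ) * ((Equiv.Perm.sign τ : ℤ) : ℂ) = 1 := by
          rcases Int.units_eq_one_or (Equiv.Perm.sign τ) with h | h <;> rw [h] <;> norm_num
        rw [boole_eq hcond, hsign]
        linear_combination (-(((Equiv.Perm.sign π : ℤ) : ℂ) *
          (if v = ⇑(τ * π) then (1:ℂ) else 0))) * hsq)
    rw [key, ← Finset.mul_sum]
    have : (∑ σ : Equiv.Perm (Fin n), ((Equiv.Perm.sign σ : ℤ) : ℂ) * (if v = ⇑σ then 1 else 0))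
        = epsv v := rfl
    rw [this]
    have hepsw : epsv w = ((Equiv.Perm.sign τ : ℤ) : ℂ) := by
      rw [hwτ, epsv_perm]
    rw [hepsw]
    ring
  · rw [epsv_nonbij hw, mul_zero]
    have hni : ¬ Function.Injective w := fun hinj => hw ((Finite.injective_iff_bijective).1 hinj)
    rw [Function.not_injective_iff] at hni
    obtain ⟨i, j, hij, hne⟩ := hni
    set S := ∑ π : Equiv.Perm (Fin n),
      ((Equiv.Perm.sign π : ℤ) : ℂ) * (if v = w ∘ ⇑π then 1 else 0) with hS
    have hflip : ∀ π : Equiv.Perm (Fin n),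
        ((Equiv.Perm.sign (Equiv.swap i j * π) : ℤ) : ℂ) *
          (if v = w ∘ ⇑(Equiv.swap i j * π) then 1 else 0)
        = - (((Equiv.Perm.sign π : ℤ) : ℂ) * (if v = w ∘ ⇑π then 1 else 0)) := by
      intro π
      have hsign : ((Equiv.Perm.sign (Equiv.swap i j * π) : ℤ) : ℂ)
          = - ((Equiv.Perm.sign π : ℤ) : ℂ) := by
        rw [Equiv.Perm.sign_mul, Equiv.Perm.sign_swap hne]
        push_cast
        ring
      have hcond : (v = w ∘ ⇑(Equiv.swap i j * π)) ↔ (v = w ∘ ⇑π) := by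
        have : w ∘ ⇑(Equiv.swap i j * π) = w ∘ ⇑π := by
          funext c
          simp only [Function.comp_apply, Equiv.Perm.mul_apply]
          rcases eq_or_ne (π c) i with h | h
          · rw [h, Equiv.swap_apply_left, ← hij]
          · rcases eq_or_ne (π c) j with h2 | h2
            · rw [h2, Equiv.swap_apply_right, hij]
            · rw [Equiv.swap_apply_of_ne_of_ne h h2]
        rw [this]
      rw [hsign, boole_eq hcond]
      ring
    have hSS : S = - S := by
      conv_lhs => rw [hS, ← Equiv.sum_comp (Equiv.mulLeft (Equiv.swap i j))
        (fun π => ((Equiv.Perm.sign π : ℤ) : ℂ) * (if v = w ∘ ⇑π then 1 else 0))]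
      simp only [Equiv.coe_mulLeft]
      refine (Finset.sum_congr rfl (fun π _ => hflip π)).trans ?_
      rw [Finset.sum_neg_distrib]
    have : S + S = 0 := by
      nth_rewrite 1 [hSS]
      ring
    exact add_self_eq_zero.mp this

lemma antisym_apply (v w : Fin n → Fin n) :
    antisym n n v w = ((n.factorial : ℂ))⁻¹ * (epsv v * epsv w) := by
  unfold antisym permTensorOp
  simp only [Matrix.smul_apply, Matrix.sum_apply, Matrix.of_apply, smul_eq_mul]
  rw [← sum_sign_comp v w]

end Assembly
/-- the quantum determinant is the explicit central scalar function. -/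
theorem qdet_explicit (n N : ℕ) (hn : 1 ≤ n) (hN : 1 ≤ N) (η : ℂ) (ξ : Fin N → ℂ)
    (K : Matrix (Fin n) (Fin n) ℂ) (lam : ℂ) :
    transfer n N η ξ K n lam =
      qdet n N η ξ K lam • (1 : Matrix (Fin N → Fin n) (Fin N → Fin n) ℂ) := by
  classical
  have hfact : ((n.factorial : ℂ)) ≠ 0 := Nat.cast_ne_zero.mpr (Nat.factorial_ne_zero n)
  -- the big product satisfies the covector eigen-relation with eigenvalue `qdet`
  have hQ : IsQ ((List.ofFn fun j : Fin n =>
      MauxJ n N η ξ K n j (lam - (j : ℕ) * η)).prod) (qdet n N η ξ K lam) := by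
    rw [bigProd_factor η lam ξ K]
    have hYs := IsQ_ofFn_prod
      (fun b : Fin N => (List.ofFn fun j : Fin n =>
        emb j (Raux n N η (lam - (j : ℕ) * η - ξ b.rev) b.rev)).prod)
      (fun b : Fin N => (lam - ξ b.rev + η) *
        ∏ m ∈ Finset.Icc 1 (n-1), (lam - ξ b.rev - (m : ℂ) * η))
      (fun b => IsQ_site hn η lam ξ b.rev)
    have hc : qdet n N η ξ K lam
        = K.det * ∏ b : Fin N, ((lam - ξ b.rev + η) *
            ∏ m ∈ Finset.Icc 1 (n-1), (lam - ξ b.rev - (m : ℂ) * η)) := by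
      rw [qdet]
      congr 1
      exact (Equiv.prod_comp Fin.revPerm
        (fun b => (lam - ξ b + η) *
          ∏ m ∈ Finset.Icc 1 (n-1), (lam - ξ b - (m : ℂ) * η))).symm
    rw [hc]
    exact IsQ_mul (IsQ_Kbig K) hYs
  set P := (List.ofFn fun j : Fin n =>
      MauxJ n N η ξ K n j (lam - (j : ℕ) * η)).prod with hP
  ext x y
  rw [transfer, Matrix.of_apply, Matrix.smul_apply, Matrix.one_apply, smul_eq_mul]
  have step1 : ∀ v : Fin n → Fin n,
      (antisymH n N n * P) (v, x) (v, y)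
        = ∑ p : Fin n → Fin n, ∑ z : Fin N → Fin n,
            ((n.factorial : ℂ))⁻¹ * (epsv v * epsv p) * (if x = z then (1:ℂ) else 0)
              * P (p, z) (v, y) := by
    intro v
    rw [Matrix.mul_apply, Fintype.sum_prod_type]
    apply Finset.sum_congr rfl
    intro p _
    apply Finset.sum_congr rfl
    intro z _
    congr 1
    show antisymH n N n (v, x) (p, z) = _
    rw [antisymH, Matrix.of_apply, antisym_apply]
  have step2 : ∀ v p : Fin n → Fin n,
      (∑ z : Fin N → Fin n,
        ((n.factorial : ℂ))⁻¹ * (epsv v * epsv p) * (if x = z then (1:ℂ) else 0)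
          * P (p, z) (v, y))
        = ((n.factorial : ℂ))⁻¹ * (epsv v * epsv p) * P (p, x) (v, y) := by
    intro v p
    have reshape : ∀ z : Fin N → Fin n,
        ((n.factorial : ℂ))⁻¹ * (epsv v * epsv p) * (if x = z then (1:ℂ) else 0)
          * P (p, z) (v, y)
        = if x = z then ((n.factorial : ℂ))⁻¹ * (epsv v * epsv p) * P (p, z) (v, y) else 0 := by
      intro z
      by_cases h : x = z
      · simp [h]
      · simp [h]
    rw [Finset.sum_congr rfl (fun z _ => reshape z)]
    rw [Finset.sum_ite_eq Finset.univ x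
      (fun z => ((n.factorial : ℂ))⁻¹ * (epsv v * epsv p) * P (p, z) (v, y))]
    simp
  have step3 :
      (∑ v : Fin n → Fin n, (antisymH n N n * P) (v, x) (v, y))
        = ∑ p : Fin n → Fin n, ∑ v : Fin n → Fin n,
            ((n.factorial : ℂ))⁻¹ * (epsv v * epsv p) * P (p, x) (v, y) := by
    rw [Finset.sum_congr rfl (fun v _ => step1 v)]
    rw [Finset.sum_congr rfl (fun v _ =>
      Finset.sum_congr rfl (fun p _ => step2 v p))]
    exact Finset.sum_comm
  rw [step3]
  have step4 : ∀ p : Fin n → Fin n,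
      (∑ v : Fin n → Fin n,
        ((n.factorial : ℂ))⁻¹ * (epsv v * epsv p) * P (p, x) (v, y))
        = ((n.factorial : ℂ))⁻¹ * epsv p *
            (qdet n N η ξ K lam * epsv p * (if x = y then (1:ℂ) else 0)) := by
    intro p
    have reshape : ∀ v : Fin n → Fin n,
        ((n.factorial : ℂ))⁻¹ * (epsv v * epsv p) * P (p, x) (v, y)
          = ((n.factorial : ℂ))⁻¹ * epsv p * (epsv v * P (p, x) (v, y)) := by
      intro v
      ring
    rw [Finset.sum_congr rfl (fun v _ => reshape v), ← Finset.mul_sum, hQ p x y]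
  rw [Finset.sum_congr rfl (fun p _ => step4 p)]
  have reshape2 : ∀ p : Fin n → Fin n,
      ((n.factorial : ℂ))⁻¹ * epsv p *
          (qdet n N η ξ K lam * epsv p * (if x = y then (1:ℂ) else 0))
        = (((n.factorial : ℂ))⁻¹ * qdet n N η ξ K lam * (if x = y then (1:ℂ) else 0))
            * (epsv p * epsv p) := by
    intro p
    ring
  rw [Finset.sum_congr rfl (fun p _ => reshape2 p), ← Finset.mul_sum, epsv_sq_sum n]
  field_simp

end GLnSoV
end
end
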